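/- arXiv:1307.6149 — 4 statements merged into one kernel-verified Lean document; each statement's English description precedes it below -/
import Mathlib

section
/- If F ∈ 𝓙 and Ḡ is weakly tail-equivalent to F̄, then the convolution F*G belongs to 𝓙. -/
open MeasureTheory Filter Set

/-- Tail of a distribution: `F̄(x) = μ(x, ∞)`. -/
noncomputable def tail (μ : Measure ℝ) (x : ℝ) : ℝ := (μ (Set.Ioi x)).toReal

/-- Conditional probability `P(A | X₁ + X₂ > x)` for two i.i.d. variables with law `μ`. -/
noncomputable def condPair (μ : Measure ℝ) (A : Set (ℝ × ℝ)) (x : ℝ) : ℝ :=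
  ((μ.prod μ) (A ∩ {p | x < p.1 + p.2})).toReal / ((μ.prod μ) {p | x < p.1 + p.2}).toReal

/-- The class 𝓙 : `lim_{K→∞} liminf_{x→∞} P(max(X₁,X₂) > x − K | X₁ + X₂ > x) = 1`. -/
def MemJ (μ : Measure ℝ) : Prop :=
  Tendsto (fun K : ℝ =>
      liminf (fun x : ℝ => condPair μ {p | x - K < max p.1 p.2} x) atTop)
    atTop (nhds 1)

/-- The class 𝓙 (equivalent form): for every nonnegative, unbounded, nondecreasing `g`,
`lim_{x→∞} P(min(X₁,X₂) > g(x) | X₁ + X₂ > x) = 0`. -/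
def MemJg (μ : Measure ℝ) : Prop :=
  ∀ g : ℝ → ℝ, (∀ x, 0 ≤ g x) → Monotone g → (∀ M, ∃ x, M < g x) →
    Tendsto (fun x : ℝ => condPair μ {p | g x < min p.1 p.2} x) atTop (nhds 0)

/-- Tail of the two-fold convolution: `F̄²*(x) = P(X₁ + X₂ > x)`. -/
noncomputable def tail2 (μ : Measure ℝ) (x : ℝ) : ℝ := ((μ.prod μ) {p | x < p.1 + p.2}).toReal

/-- Weak asymptotic tail-equivalence `F̄ ≍ Ḡ`:
`0 < liminf F̄(x)/Ḡ(x) ≤ limsup F̄(x)/Ḡ(x) < ∞`. -/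
def WeakTailEquiv (μ ν : Measure ℝ) : Prop :=
  (∃ c : ℝ, 0 < c ∧ ∀ᶠ x in atTop, c * tail ν x ≤ tail μ x) ∧
  (∃ C : ℝ, ∀ᶠ x in atTop, tail μ x ≤ C * tail ν x)

/-- Convolution of two laws on ℝ. -/
noncomputable def conv (μ ν : Measure ℝ) : Measure ℝ :=
  Measure.map (fun p : ℝ × ℝ => p.1 + p.2) (μ.prod ν)

/-- `n`-fold convolution `F^{n*}`. -/
noncomputable def nconv (μ : Measure ℝ) : ℕ → Measure ℝ
  | 0 => Measure.dirac 0
  | n + 1 => conv (nconv μ n) μ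



-- ===== auxiliary development =====
open scoped ENNReal

noncomputable def Te (μ : Measure ℝ) (t : ℝ) : ℝ≥0∞ := μ (Set.Ioi t)
noncomputable def T2e (μ : Measure ℝ) (t : ℝ) : ℝ≥0∞ := (μ.prod μ) {p | t < p.1 + p.2}

lemma Te_anti (μ : Measure ℝ) : Antitone (Te μ) :=
  fun _ _ hab => measure_mono (Ioi_subset_Ioi hab)

lemma Te_meas (μ : Measure ℝ) : Measurable (Te μ) := (Te_anti μ).measurable

lemma msum (x : ℝ) : MeasurableSet {p : ℝ × ℝ | x < p.1 + p.2} :=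
  measurableSet_lt measurable_const (measurable_fst.add measurable_snd)

lemma T2e_anti (μ : Measure ℝ) : Antitone (T2e μ) :=
  fun _ _ hab => measure_mono (fun p hp => lt_of_le_of_lt hab hp)

lemma T2e_meas (μ : Measure ℝ) : Measurable (T2e μ) := (T2e_anti μ).measurable

lemma Te_tendsto (μ : Measure ℝ) [IsProbabilityMeasure μ] :
    Tendsto (Te μ) atTop (nhds 0) := by
  have h := tendsto_measure_iInter_atTop (μ := μ) (s := fun t : ℝ => Ioi t)
    (fun i => measurableSet_Ioi.nullMeasurableSet) (fun a b hab => Ioi_subset_Ioi hab)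
    ⟨0, (measure_ne_top μ _)⟩
  have : ⋂ t : ℝ, Ioi t = (∅ : Set ℝ) := by
    ext y; simp only [mem_iInter, mem_Ioi, mem_empty_iff_false, iff_false, not_forall, not_lt]
    exact ⟨y, le_refl y⟩
  rw [this, measure_empty] at h; exact h
/-- basic swap lemma -/
lemma swap_le {μ ν : Measure ℝ} [SFinite μ] [SFinite ν] {C : ℝ≥0∞}
    (hC : ∀ t, ν (Ioi t) ≤ C * μ (Ioi t))
    (ρ : Measure ℝ) [SFinite ρ] {S : Set (ℝ × ℝ)} (hS : MeasurableSet S)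
    (hsec : ∀ a : ℝ, Prod.mk a ⁻¹' S = ∅ ∨ ∃ t, Prod.mk a ⁻¹' S = Ioi t) :
    (ρ.prod ν) S ≤ C * (ρ.prod μ) S := by
  rw [Measure.prod_apply hS, Measure.prod_apply hS,
    ← lintegral_const_mul _ (measurable_measure_prodMk_left hS)]
  refine lintegral_mono fun a => ?_
  rcases hsec a with h | ⟨t, h⟩
  · rw [h]; simp
  · rw [h]; exact hC t

lemma swap_ge {μ ν : Measure ℝ} [SFinite μ] [SFinite ν] {c : ℝ≥0∞}
    (hc : ∀ t, c * μ (Ioi t) ≤ ν (Ioi t))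
    (ρ : Measure ℝ) [SFinite ρ] {S : Set (ℝ × ℝ)} (hS : MeasurableSet S)
    (hsec : ∀ a : ℝ, Prod.mk a ⁻¹' S = ∅ ∨ ∃ t, Prod.mk a ⁻¹' S = Ioi t) :
    c * (ρ.prod μ) S ≤ (ρ.prod ν) S := by
  rw [Measure.prod_apply hS, Measure.prod_apply hS,
    ← lintegral_const_mul _ (measurable_measure_prodMk_left hS)]
  refine lintegral_mono fun a => ?_
  rcases hsec a with h | ⟨t, h⟩
  · rw [h]; simp
  · rw [h]; exact hc t

/-- global tail comparison from eventual one -/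
lemma global_compare {μ ν : Measure ℝ} [IsProbabilityMeasure μ] [IsProbabilityMeasure ν]
    (hμub : ∀ x : ℝ, 0 < μ (Set.Ioi x)) (hνub : ∀ x : ℝ, 0 < ν (Set.Ioi x))
    (h1 : ∃ c : ℝ, 0 < c ∧ ∀ᶠ x in atTop, c * (μ (Set.Ioi x)).toReal ≤ (ν (Set.Ioi x)).toReal)
    (h2 : ∃ C : ℝ, ∀ᶠ x in atTop, (ν (Set.Ioi x)).toReal ≤ C * (μ (Set.Ioi x)).toReal) :
    ∃ c C : ℝ≥0∞, 0 < c ∧ c ≠ ∞ ∧ C ≠ ∞ ∧ (∀ t, c * μ (Set.Ioi t) ≤ ν (Set.Ioi t)) ∧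
      (∀ t, ν (Set.Ioi t) ≤ C * μ (Set.Ioi t)) := by
  obtain ⟨c, hc, hce⟩ := h1
  obtain ⟨C, hCe⟩ := h2
  rw [eventually_atTop] at hce hCe
  obtain ⟨x₁, hx₁⟩ := hce
  obtain ⟨x₂, hx₂⟩ := hCe
  set x₀ := max x₁ x₂ with hx₀
  refine ⟨min (ENNReal.ofReal c) (ν (Set.Ioi x₀)), max (ENNReal.ofReal C) (μ (Set.Ioi x₀))⁻¹,
    ?_, ?_, ?_, ?_, ?_⟩
  · exact lt_min (ENNReal.ofReal_pos.2 hc) (hνub x₀)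
  · exact (lt_of_le_of_lt (min_le_right _ _) (measure_lt_top ν _)).ne
  · simp only [ne_eq, max_eq_top, ENNReal.ofReal_ne_top, false_or, ENNReal.inv_eq_top]
    exact (hμub x₀).ne'
  · intro t
    rcases le_or_gt x₀ t with ht | ht
    · have := hx₁ t (le_trans (le_max_left _ _) ht)
      calc min (ENNReal.ofReal c) (ν (Set.Ioi x₀)) * μ (Set.Ioi t)
          ≤ ENNReal.ofReal c * μ (Set.Ioi t) := by gcongr; exact min_le_left _ _
        _ = ENNReal.ofReal (c * (μ (Set.Ioi t)).toReal) := by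
            rw [ENNReal.ofReal_mul hc.le, ENNReal.ofReal_toReal (measure_ne_top μ _)]
        _ ≤ ENNReal.ofReal ((ν (Set.Ioi t)).toReal) := ENNReal.ofReal_le_ofReal this
        _ = ν (Set.Ioi t) := ENNReal.ofReal_toReal (measure_ne_top ν _)
    · calc min (ENNReal.ofReal c) (ν (Set.Ioi x₀)) * μ (Set.Ioi t)
          ≤ ν (Set.Ioi x₀) * 1 := by
            gcongr
            · exact min_le_right _ _
            · exact prob_le_one
        _ = ν (Set.Ioi x₀) := mul_one _
        _ ≤ ν (Set.Ioi t) := measure_mono (Ioi_subset_Ioi ht.le)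
  · intro t
    rcases le_or_gt x₀ t with ht | ht
    · have h := hx₂ t (le_trans (le_max_right _ _) ht)
      have hC0 : 0 < C := by
        have h1 : 0 < (ν (Set.Ioi t)).toReal :=
          ENNReal.toReal_pos (hνub t).ne' (measure_ne_top ν _)
        have h2 : 0 < (μ (Set.Ioi t)).toReal :=
          ENNReal.toReal_pos (hμub t).ne' (measure_ne_top μ _)
        nlinarith
      calc ν (Set.Ioi t) = ENNReal.ofReal ((ν (Set.Ioi t)).toReal) :=
            (ENNReal.ofReal_toReal (measure_ne_top ν _)).symm
        _ ≤ ENNReal.ofReal (C * (μ (Set.Ioi t)).toReal) := ENNReal.ofReal_le_ofReal h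
        _ = ENNReal.ofReal C * μ (Set.Ioi t) := by
            rw [ENNReal.ofReal_mul hC0.le, ENNReal.ofReal_toReal (measure_ne_top μ _)]
        _ ≤ max (ENNReal.ofReal C) (μ (Set.Ioi x₀))⁻¹ * μ (Set.Ioi t) := by
            gcongr; exact le_max_left _ _
    · calc ν (Set.Ioi t) ≤ 1 := prob_le_one
        _ = (μ (Set.Ioi x₀))⁻¹ * μ (Set.Ioi x₀) :=
            (ENNReal.inv_mul_cancel (hμub x₀).ne' (measure_ne_top μ _)).symm
        _ ≤ max (ENNReal.ofReal C) (μ (Set.Ioi x₀))⁻¹ * μ (Set.Ioi t) := by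
            exact mul_le_mul' (le_max_right _ _) (measure_mono (Ioi_subset_Ioi ht.le))
noncomputable def J2 (μ : Measure ℝ) (h t : ℝ) : ℝ≥0∞ :=
  (μ.prod μ) {p : ℝ × ℝ | h < p.1 ∧ h < p.2 ∧ t < p.1 + p.2}

lemma mp_regroup (μ : Measure ℝ) [IsProbabilityMeasure μ] :
    MeasurePreserving (fun P : (ℝ × ℝ) × (ℝ × ℝ) => ((P.1.1, P.2.1), (P.1.2, P.2.2)))
      ((μ.prod μ).prod (μ.prod μ)) ((μ.prod μ).prod (μ.prod μ)) := by
  have e1 : MeasurePreserving (MeasurableEquiv.prodAssoc : (ℝ × ℝ) × (ℝ × ℝ) ≃ᵐ ℝ × ℝ × ℝ × ℝ)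
      ((μ.prod μ).prod (μ.prod μ)) (μ.prod (μ.prod (μ.prod μ))) :=
    measurePreserving_prodAssoc μ μ (μ.prod μ)
  have e2 : MeasurePreserving
      (Prod.map (id : ℝ → ℝ) (MeasurableEquiv.prodAssoc : (ℝ × ℝ) × ℝ ≃ᵐ ℝ × ℝ × ℝ).symm)
      (μ.prod (μ.prod (μ.prod μ))) (μ.prod ((μ.prod μ).prod μ)) :=
    (MeasurePreserving.id μ).prod ((measurePreserving_prodAssoc μ μ μ).symm _)
  have e3 : MeasurePreserving
      (Prod.map (id : ℝ → ℝ) (Prod.map (Prod.swap : ℝ × ℝ → ℝ × ℝ) (id : ℝ → ℝ)))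
      (μ.prod ((μ.prod μ).prod μ)) (μ.prod ((μ.prod μ).prod μ)) :=
    (MeasurePreserving.id μ).prod ((Measure.measurePreserving_swap).prod (MeasurePreserving.id μ))
  have e4 : MeasurePreserving
      (Prod.map (id : ℝ → ℝ) (MeasurableEquiv.prodAssoc : (ℝ × ℝ) × ℝ ≃ᵐ ℝ × ℝ × ℝ))
      (μ.prod ((μ.prod μ).prod μ)) (μ.prod (μ.prod (μ.prod μ))) :=
    (MeasurePreserving.id μ).prod (measurePreserving_prodAssoc μ μ μ)
  have e5 : MeasurePreserving (MeasurableEquiv.prodAssoc : (ℝ × ℝ) × (ℝ × ℝ) ≃ᵐ ℝ × ℝ × ℝ × ℝ).symm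
      (μ.prod (μ.prod (μ.prod μ))) ((μ.prod μ).prod (μ.prod μ)) :=
    (measurePreserving_prodAssoc μ μ (μ.prod μ)).symm _
  have h := (((e5.comp e4).comp e3).comp e2).comp e1
  convert h using 1
  funext P; rfl

lemma mEN1 (y : ℝ) : MeasurableSet {P : (ℝ × ℝ) × (ℝ × ℝ) | y < P.1.1 + P.1.2} :=
  measurableSet_lt measurable_const
    ((measurable_fst.comp measurable_fst).add (measurable_snd.comp measurable_fst))

lemma mEN2 (y : ℝ) : MeasurableSet {P : (ℝ × ℝ) × (ℝ × ℝ) | y < P.2.1 + P.2.2} :=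
  measurableSet_lt measurable_const
    ((measurable_fst.comp measurable_snd).add (measurable_snd.comp measurable_snd))

lemma mENs (x : ℝ) :
    MeasurableSet {P : (ℝ × ℝ) × (ℝ × ℝ) | x < P.1.1 + P.1.2 + P.2.1 + P.2.2} :=
  measurableSet_lt measurable_const
    ((((measurable_fst.comp measurable_fst).add (measurable_snd.comp measurable_fst)).add
      (measurable_fst.comp measurable_snd)).add (measurable_snd.comp measurable_snd))

lemma mU1 (h x : ℝ) :
    MeasurableSet {P : (ℝ × ℝ) × (ℝ × ℝ) | h < P.1.1 ∧ h < P.2.1 ∧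
      x < P.1.1 + P.1.2 + P.2.1 + P.2.2} := by
  refine MeasurableSet.inter ?_ (MeasurableSet.inter ?_ (mENs x))
  · exact measurableSet_lt measurable_const (measurable_fst.comp measurable_fst)
  · exact measurableSet_lt measurable_const (measurable_fst.comp measurable_snd)

lemma T4_eq (μ : Measure ℝ) [IsProbabilityMeasure μ] (x : ℝ) :
    ((μ.prod μ).prod (μ.prod μ)) {P | x < P.1.1 + P.1.2 + P.2.1 + P.2.2}
      = ∫⁻ q, T2e μ (x - q.1 - q.2) ∂(μ.prod μ) := by
  rw [Measure.prod_apply_symm (mENs x)]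
  refine lintegral_congr fun q => ?_
  unfold T2e
  congr 1
  ext p
  simp only [mem_preimage, mem_setOf_eq]
  constructor <;> intro hh <;> linarith

lemma Q_eq (μ : Measure ℝ) [IsProbabilityMeasure μ] (h x : ℝ) :
    ((μ.prod μ).prod (μ.prod μ)) {P | h < P.1.1 ∧ h < P.2.1 ∧
      x < P.1.1 + P.1.2 + P.2.1 + P.2.2}
      = ∫⁻ q, J2 μ h (x - q.1 - q.2) ∂(μ.prod μ) := by
  have hU' : MeasurableSet {P : (ℝ × ℝ) × (ℝ × ℝ) | h < P.1.1 ∧ h < P.1.2 ∧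
      x < P.1.1 + P.2.1 + P.1.2 + P.2.2} := by
    refine MeasurableSet.inter ?_ (MeasurableSet.inter ?_ ?_)
    · exact measurableSet_lt measurable_const (measurable_fst.comp measurable_fst)
    · exact measurableSet_lt measurable_const (measurable_snd.comp measurable_fst)
    · exact measurableSet_lt measurable_const
        ((((measurable_fst.comp measurable_fst).add (measurable_fst.comp measurable_snd)).add
          (measurable_snd.comp measurable_fst)).add (measurable_snd.comp measurable_snd))
  have hpre : (fun P : (ℝ × ℝ) × (ℝ × ℝ) => ((P.1.1, P.2.1), (P.1.2, P.2.2))) ⁻¹'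
      {P : (ℝ × ℝ) × (ℝ × ℝ) | h < P.1.1 ∧ h < P.1.2 ∧
        x < P.1.1 + P.2.1 + P.1.2 + P.2.2}
      = {P : (ℝ × ℝ) × (ℝ × ℝ) | h < P.1.1 ∧ h < P.2.1 ∧
        x < P.1.1 + P.1.2 + P.2.1 + P.2.2} := rfl
  rw [← hpre, (mp_regroup μ).measure_preimage hU'.nullMeasurableSet,
    Measure.prod_apply_symm hU']
  refine lintegral_congr fun q => ?_
  unfold J2
  congr 1
  ext p
  simp only [mem_preimage, mem_setOf_eq]
  constructor <;> rintro ⟨h1, h2, h3⟩ <;> exact ⟨h1, h2, by linarith⟩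
lemma T2e_pos (μ : Measure ℝ) [IsProbabilityMeasure μ] (hμub : ∀ x : ℝ, 0 < μ (Set.Ioi x))
    (t : ℝ) : 0 < T2e μ t := by
  have hsub : Set.Ioi t ×ˢ Set.Ioi (0:ℝ) ⊆ {p : ℝ × ℝ | t < p.1 + p.2} := by
    rintro ⟨a, b⟩ ⟨ha, hb⟩
    simp only [mem_Ioi] at ha hb
    simp only [mem_setOf_eq]
    linarith
  calc (0:ℝ≥0∞) < μ (Set.Ioi t) * μ (Set.Ioi 0) :=
        ENNReal.mul_pos (hμub t).ne' (hμub 0).ne'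
    _ = (μ.prod μ) (Set.Ioi t ×ˢ Set.Ioi (0:ℝ)) := (Measure.prod_prod _ _).symm
    _ ≤ T2e μ t := measure_mono hsub

lemma T2e_ne_top (μ : Measure ℝ) [IsProbabilityMeasure μ] (t : ℝ) : T2e μ t ≠ ∞ :=
  measure_ne_top _ _

lemma condPair_num (μ : Measure ℝ) [IsProbabilityMeasure μ]
    (hμub : ∀ x : ℝ, 0 < μ (Set.Ioi x)) (A : Set (ℝ × ℝ)) (t : ℝ) :
    (μ.prod μ) (A ∩ {p | t < p.1 + p.2}) = ENNReal.ofReal (condPair μ A t) * T2e μ t := by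
  have hden := T2e_pos μ hμub t
  have hdenR : 0 < (T2e μ t).toReal :=
    ENNReal.toReal_pos hden.ne' (T2e_ne_top μ t)
  unfold condPair
  rw [show ((μ.prod μ) {p | t < p.1 + p.2}).toReal = (T2e μ t).toReal from rfl,
    ENNReal.ofReal_div_of_pos hdenR, ENNReal.ofReal_toReal (measure_ne_top _ _),
    ENNReal.ofReal_toReal (T2e_ne_top μ t),
    ENNReal.div_mul_cancel hden.ne' (T2e_ne_top μ t)]
lemma eps_tendsto {ρ : ℝ → ℝ} (hρ : Tendsto ρ atTop (nhds 0)) :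
    Tendsto (fun T : ℝ => ⨆ t ∈ Ici T, ENNReal.ofReal (ρ t)) atTop (nhds 0) := by
  rw [ENNReal.tendsto_nhds_zero]
  intro ε hε
  obtain ⟨r, hr, hrε⟩ : ∃ r : ℝ, 0 < r ∧ ENNReal.ofReal r ≤ ε := by
    by_cases hε' : ε = ∞
    · exact ⟨1, one_pos, by simp [hε']⟩
    · exact ⟨ε.toReal, ENNReal.toReal_pos hε.ne' hε', by rw [ENNReal.ofReal_toReal hε']⟩
  obtain ⟨T₀, hT₀⟩ := eventually_atTop.1 (hρ.eventually_lt_const hr)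
  filter_upwards [eventually_ge_atTop T₀] with T hT
  exact iSup₂_le fun t ht =>
    le_trans (ENNReal.ofReal_le_ofReal (hT₀ t (le_trans hT ht)).le) hrε

lemma J2_le_sq (μ : Measure ℝ) [IsProbabilityMeasure μ] (h t : ℝ) :
    J2 μ h t ≤ Te μ h * Te μ h := by
  rw [show Te μ h * Te μ h = (μ.prod μ) (Set.Ioi h ×ˢ Set.Ioi h) from
    (Measure.prod_prod _ _).symm]
  exact measure_mono fun p hp => ⟨hp.1, hp.2.1⟩

lemma core (μ : Measure ℝ) [IsProbabilityMeasure μ]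
    (hμnn : μ (Set.Iio 0) = 0) (hμub : ∀ x : ℝ, 0 < μ (Set.Ioi x))
    (g : ℝ → ℝ) (hg0 : ∀ x, 0 ≤ g x) (hgmono : Monotone g) (hgunb : ∀ M, ∃ x, M < g x)
    (hJ : MemJg μ) :
    ∃ δ : ℝ → ℝ≥0∞, Tendsto δ atTop (nhds 0) ∧ (∀ x, δ x ≠ ∞) ∧ ∀ x : ℝ,
      ((μ.prod μ).prod (μ.prod μ)) {P : (ℝ × ℝ) × (ℝ × ℝ) |
          g x < P.1.1 + P.1.2 ∧ g x < P.2.1 + P.2.2 ∧ x < P.1.1 + P.1.2 + P.2.1 + P.2.2}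
        ≤ δ x * ((μ.prod μ).prod (μ.prod μ)) {P : (ℝ × ℝ) × (ℝ × ℝ) |
            x < P.1.1 + P.1.2 + P.2.1 + P.2.2} := by
  classical
  set h : ℝ → ℝ := fun x => g x / 2 with hh_def
  have hh0 : ∀ x, 0 ≤ h x := fun x => by simp only [hh_def]; linarith [hg0 x]
  have hhmono : Monotone h := fun a b hab => by
    simp only [hh_def]; linarith [hgmono hab]
  have hhunb : ∀ M, ∃ x, M < h x := fun M => by
    obtain ⟨x, hx⟩ := hgunb (2 * M); exact ⟨x, by simp only [hh_def]; linarith⟩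
  have hhtop : Tendsto h atTop atTop :=
    tendsto_atTop_atTop_of_monotone hhmono fun b => (hhunb b).imp fun x hx => hx.le
  set ρh : ℝ → ℝ := fun t => condPair μ {p | h t < min p.1 p.2} t with hρh_def
  have hρh : Tendsto ρh atTop (nhds 0) := hJ h hh0 hhmono hhunb
  set eps : ℝ → ℝ≥0∞ := fun T => ⨆ t ∈ Ici T, ENNReal.ofReal (ρh t) with heps_def
  have heps1 : ∀ T, eps T ≤ 1 := by
    intro T
    refine iSup₂_le fun t _ => ?_
    have hnum : (μ.prod μ) ({p : ℝ × ℝ | h t < min p.1 p.2} ∩ {p | t < p.1 + p.2})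
        ≤ (μ.prod μ) {p : ℝ × ℝ | t < p.1 + p.2} := measure_mono inter_subset_right
    have : ρh t ≤ 1 := by
      apply div_le_one_of_le₀
      · exact ENNReal.toReal_mono (measure_ne_top _ _) hnum
      · exact ENNReal.toReal_nonneg
    calc ENNReal.ofReal (ρh t) ≤ ENNReal.ofReal 1 := ENNReal.ofReal_le_ofReal this
      _ = 1 := ENNReal.ofReal_one
  refine ⟨fun x => 4 * (eps (h x) + Te μ (h x) * (Te μ 0)⁻¹), ?_, ?_, ?_⟩
  · -- tendsto 0
    have h1 : Tendsto (fun x => eps (h x)) atTop (nhds 0) :=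
      (eps_tendsto hρh).comp hhtop
    have h2 : Tendsto (fun x => Te μ (h x) * (Te μ 0)⁻¹) atTop (nhds 0) := by
      have := ENNReal.Tendsto.mul_const ((Te_tendsto μ).comp hhtop)
        (b := (Te μ 0)⁻¹) (Or.inr (by simp [Te, (hμub 0).ne']))
      simpa using this
    have := ENNReal.Tendsto.const_mul (h1.add h2) (a := (4 : ℝ≥0∞)) (Or.inr (by simp))
    simpa using this
  · -- ≠ ∞
    intro x
    refine ENNReal.mul_ne_top (by simp) (ENNReal.add_ne_top.2 ⟨?_, ?_⟩)
    · exact (lt_of_le_of_lt (heps1 _) ENNReal.one_lt_top).ne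
    · exact ENNReal.mul_ne_top (measure_ne_top _ _) (by simp [Te, (hμub 0).ne'])
  · -- main bound
    intro x
    set κ := μ.prod μ with hκ
    set Pi4 := κ.prod κ with hPi4
    set hx := h x with hhx
    set T4 := Pi4 {P : (ℝ × ℝ) × (ℝ × ℝ) | x < P.1.1 + P.1.2 + P.2.1 + P.2.2} with hT4
    -- the four symmetric sets
    set U1 := {P : (ℝ × ℝ) × (ℝ × ℝ) | hx < P.1.1 ∧ hx < P.2.1 ∧
      x < P.1.1 + P.1.2 + P.2.1 + P.2.2} with hU1
    set U2 := {P : (ℝ × ℝ) × (ℝ × ℝ) | hx < P.1.1 ∧ hx < P.2.2 ∧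
      x < P.1.1 + P.1.2 + P.2.1 + P.2.2} with hU2
    set U3 := {P : (ℝ × ℝ) × (ℝ × ℝ) | hx < P.1.2 ∧ hx < P.2.1 ∧
      x < P.1.1 + P.1.2 + P.2.1 + P.2.2} with hU3
    set U4 := {P : (ℝ × ℝ) × (ℝ × ℝ) | hx < P.1.2 ∧ hx < P.2.2 ∧
      x < P.1.1 + P.1.2 + P.2.1 + P.2.2} with hU4
    have hmeas1 : MeasurableSet U1 := mU1 hx x
    have hmeasfst1 : Measurable fun P : (ℝ × ℝ) × (ℝ × ℝ) => P.1.1 :=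
      measurable_fst.comp measurable_fst
    have hmeasfst2 : Measurable fun P : (ℝ × ℝ) × (ℝ × ℝ) => P.1.2 :=
      measurable_snd.comp measurable_fst
    have hmeassnd1 : Measurable fun P : (ℝ × ℝ) × (ℝ × ℝ) => P.2.1 :=
      measurable_fst.comp measurable_snd
    have hmeassnd2 : Measurable fun P : (ℝ × ℝ) × (ℝ × ℝ) => P.2.2 :=
      measurable_snd.comp measurable_snd
    have hmeas2 : MeasurableSet U2 :=
      (measurableSet_lt measurable_const hmeasfst1).inter
        ((measurableSet_lt measurable_const hmeassnd2).inter (mENs x))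
    have hmeas3 : MeasurableSet U3 :=
      (measurableSet_lt measurable_const hmeasfst2).inter
        ((measurableSet_lt measurable_const hmeassnd1).inter (mENs x))
    have hmeas4 : MeasurableSet U4 :=
      (measurableSet_lt measurable_const hmeasfst2).inter
        ((measurableSet_lt measurable_const hmeassnd2).inter (mENs x))
    -- symmetry: all Ui have the same measure
    have hswap2 : Pi4 U2 = Pi4 U1 := by
      have mp : MeasurePreserving (Prod.map (id : ℝ × ℝ → ℝ × ℝ) (Prod.swap : ℝ × ℝ → ℝ × ℝ))
          Pi4 Pi4 := (MeasurePreserving.id κ).prod Measure.measurePreserving_swap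
      have hpre : (Prod.map (id : ℝ × ℝ → ℝ × ℝ) (Prod.swap : ℝ × ℝ → ℝ × ℝ)) ⁻¹' U2 = U1 := by
        ext ⟨⟨a, b⟩, ⟨c, d⟩⟩
        simp only [hU1, hU2, mem_preimage, Prod.map, mem_setOf_eq, id_eq, Prod.swap]
        constructor <;> rintro ⟨h1, h2, h3⟩ <;> exact ⟨h1, h2, by linarith⟩
      rw [← mp.measure_preimage hmeas2.nullMeasurableSet, hpre]
    have hswap3 : Pi4 U3 = Pi4 U1 := by
      have mp : MeasurePreserving (Prod.map (Prod.swap : ℝ × ℝ → ℝ × ℝ) (id : ℝ × ℝ → ℝ × ℝ))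
          Pi4 Pi4 := Measure.measurePreserving_swap.prod (MeasurePreserving.id κ)
      have hpre : (Prod.map (Prod.swap : ℝ × ℝ → ℝ × ℝ) (id : ℝ × ℝ → ℝ × ℝ)) ⁻¹' U3 = U1 := by
        ext ⟨⟨a, b⟩, ⟨c, d⟩⟩
        simp only [hU1, hU3, mem_preimage, Prod.map, mem_setOf_eq, id_eq, Prod.swap]
        constructor <;> rintro ⟨h1, h2, h3⟩ <;> exact ⟨h1, h2, by linarith⟩
      rw [← mp.measure_preimage hmeas3.nullMeasurableSet, hpre]
    have hswap4 : Pi4 U4 = Pi4 U1 := by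
      have mp : MeasurePreserving (Prod.map (Prod.swap : ℝ × ℝ → ℝ × ℝ) (Prod.swap : ℝ × ℝ → ℝ × ℝ))
          Pi4 Pi4 := Measure.measurePreserving_swap.prod Measure.measurePreserving_swap
      have hpre : (Prod.map (Prod.swap : ℝ × ℝ → ℝ × ℝ) (Prod.swap : ℝ × ℝ → ℝ × ℝ)) ⁻¹' U4
          = U1 := by
        ext ⟨⟨a, b⟩, ⟨c, d⟩⟩
        simp only [hU1, hU4, mem_preimage, Prod.map, mem_setOf_eq, id_eq, Prod.swap]
        constructor <;> rintro ⟨h1, h2, h3⟩ <;> exact ⟨h1, h2, by linarith⟩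
      rw [← mp.measure_preimage hmeas4.nullMeasurableSet, hpre]
    -- step A : numerator set is inside the union
    have hsub : {P : (ℝ × ℝ) × (ℝ × ℝ) |
        g x < P.1.1 + P.1.2 ∧ g x < P.2.1 + P.2.2 ∧ x < P.1.1 + P.1.2 + P.2.1 + P.2.2}
        ⊆ U1 ∪ U2 ∪ U3 ∪ U4 := by
      rintro P ⟨hab, hcd, hS⟩
      have h1 : hx < P.1.1 ∨ hx < P.1.2 := by
        by_contra hcon
        push_neg at hcon
        have : g x = hx + hx := by simp only [hhx, hh_def]; ring
        obtain ⟨c1, c2⟩ := hcon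
        linarith
      have h2 : hx < P.2.1 ∨ hx < P.2.2 := by
        by_contra hcon
        push_neg at hcon
        have : g x = hx + hx := by simp only [hhx, hh_def]; ring
        obtain ⟨c1, c2⟩ := hcon
        linarith
      rcases h1 with h1 | h1 <;> rcases h2 with h2 | h2
      · exact Or.inl (Or.inl (Or.inl ⟨h1, h2, hS⟩))
      · exact Or.inl (Or.inl (Or.inr ⟨h1, h2, hS⟩))
      · exact Or.inl (Or.inr ⟨h1, h2, hS⟩)
      · exact Or.inr ⟨h1, h2, hS⟩
    have hNg4Q : Pi4 {P : (ℝ × ℝ) × (ℝ × ℝ) |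
        g x < P.1.1 + P.1.2 ∧ g x < P.2.1 + P.2.2 ∧ x < P.1.1 + P.1.2 + P.2.1 + P.2.2}
        ≤ 4 * Pi4 U1 := by
      calc Pi4 _ ≤ Pi4 (U1 ∪ U2 ∪ U3 ∪ U4) := measure_mono hsub
        _ ≤ Pi4 (U1 ∪ U2 ∪ U3) + Pi4 U4 := measure_union_le _ _
        _ ≤ Pi4 (U1 ∪ U2) + Pi4 U3 + Pi4 U4 := by gcongr; exact measure_union_le _ _
        _ ≤ Pi4 U1 + Pi4 U2 + Pi4 U3 + Pi4 U4 := by gcongr; exact measure_union_le _ _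
        _ = 4 * Pi4 U1 := by rw [hswap2, hswap3, hswap4]; ring
    -- step B/C : bound on Q = Pi4 U1
    have hae : ∀ᵐ q ∂κ, 0 ≤ q.1 ∧ 0 ≤ q.2 := by
      rw [Filter.eventually_iff, mem_ae_iff]
      refine measure_mono_null (fun q hq => ?_)
        (measure_union_null (s := (Iio 0 ×ˢ univ : Set (ℝ × ℝ))) (t := univ ×ˢ Iio 0) ?_ ?_)
      · simp only [mem_compl_iff, mem_setOf_eq, not_and_or, not_le] at hq
        rcases hq with hq | hq
        · exact Or.inl ⟨hq, trivial⟩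
        · exact Or.inr ⟨trivial, hq⟩
      · rw [hκ, Measure.prod_prod, hμnn, zero_mul]
      · rw [hκ, Measure.prod_prod, hμnn, mul_zero]
    have hpoint : ∀ q : ℝ × ℝ, 0 ≤ q.1 ∧ 0 ≤ q.2 →
        J2 μ hx (x - q.1 - q.2) ≤ eps hx * T2e μ (x - q.1 - q.2) +
          Set.indicator {q' : ℝ × ℝ | x - hx < q'.1 + q'.2}
            (fun _ => Te μ hx * Te μ hx) q := by
      rintro q ⟨hq1, hq2⟩
      by_cases hcase : x - hx < q.1 + q.2
      · rw [Set.indicator_of_mem (show q ∈ {q' : ℝ × ℝ | x - hx < q'.1 + q'.2} from hcase)]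
        exact le_add_left (J2_le_sq μ hx _)
      · push_neg at hcase
        set t := x - q.1 - q.2 with ht_def
        have ht1 : hx ≤ t := by simp only [ht_def]; linarith
        have ht2 : t ≤ x := by simp only [ht_def]; linarith
        have hstep : J2 μ hx t ≤
            (μ.prod μ) ({p : ℝ × ℝ | h t < min p.1 p.2} ∩ {p | t < p.1 + p.2}) := by
          refine measure_mono ?_
          rintro ⟨a, b⟩ ⟨h1, h2, h3⟩
          refine ⟨?_, h3⟩
          show h t < min a b
          exact lt_min (lt_of_le_of_lt (hhmono ht2) h1) (lt_of_le_of_lt (hhmono ht2) h2)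
        calc J2 μ hx t ≤ (μ.prod μ) ({p : ℝ × ℝ | h t < min p.1 p.2} ∩ {p | t < p.1 + p.2}) :=
              hstep
          _ = ENNReal.ofReal (ρh t) * T2e μ t := condPair_num μ hμub _ t
          _ ≤ eps hx * T2e μ t := by
              gcongr
              exact le_biSup (fun t => ENNReal.ofReal (ρh t)) ht1
          _ ≤ _ := self_le_add_right _ _
    have hmeasT2 : Measurable fun q : ℝ × ℝ => T2e μ (x - q.1 - q.2) :=
      (T2e_meas μ).comp ((measurable_const.sub measurable_fst).sub measurable_snd)
    have hQbound : Pi4 U1 ≤ eps hx * T4 + Te μ hx * Te μ hx * T2e μ (x - hx) := by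
      calc Pi4 U1 = ∫⁻ q, J2 μ hx (x - q.1 - q.2) ∂κ := Q_eq μ hx x
        _ ≤ ∫⁻ q, (eps hx * T2e μ (x - q.1 - q.2) +
            Set.indicator {q' : ℝ × ℝ | x - hx < q'.1 + q'.2}
              (fun _ => Te μ hx * Te μ hx) q) ∂κ :=
          lintegral_mono_ae (hae.mono hpoint)
        _ = eps hx * ∫⁻ q, T2e μ (x - q.1 - q.2) ∂κ +
            Te μ hx * Te μ hx * κ {q' : ℝ × ℝ | x - hx < q'.1 + q'.2} := by
          rw [lintegral_add_left (hmeasT2.const_mul _),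
            lintegral_const_mul _ hmeasT2, lintegral_indicator_const (msum (x - hx))]
        _ = eps hx * T4 + Te μ hx * Te μ hx * T2e μ (x - hx) := by
          rw [← T4_eq μ x]
          rfl
    -- step D : absorb the second term
    have hT4b : T2e μ (x - hx) * T2e μ hx ≤ T4 := by
      rw [show T2e μ (x - hx) * T2e μ hx =
        Pi4 ({p : ℝ × ℝ | x - hx < p.1 + p.2} ×ˢ {p : ℝ × ℝ | hx < p.1 + p.2}) from
        (Measure.prod_prod _ _).symm]
      refine measure_mono ?_
      rintro ⟨p, q⟩ ⟨h1, h2⟩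
      simp only [mem_setOf_eq] at h1 h2 ⊢
      linarith
    have hT2hb : Te μ hx * Te μ 0 ≤ T2e μ hx := by
      rw [show Te μ hx * Te μ 0 = (μ.prod μ) (Set.Ioi hx ×ˢ Set.Ioi (0:ℝ)) from
        (Measure.prod_prod _ _).symm]
      refine measure_mono ?_
      rintro ⟨a, b⟩ ⟨h1, h2⟩
      simp only [mem_Ioi] at h1 h2
      simp only [mem_setOf_eq]
      linarith
    have habsorb : Te μ hx * Te μ hx * T2e μ (x - hx) ≤ Te μ hx * (Te μ 0)⁻¹ * T4 := by
      have h0 : Te μ 0 ≠ 0 := (hμub 0).ne'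
      have htop : Te μ 0 ≠ ∞ := measure_ne_top _ _
      calc Te μ hx * Te μ hx * T2e μ (x - hx)
          = ((Te μ 0)⁻¹ * Te μ 0) * (Te μ hx * Te μ hx * T2e μ (x - hx)) := by
            rw [ENNReal.inv_mul_cancel h0 htop, one_mul]
        _ = Te μ hx * (Te μ 0)⁻¹ * (T2e μ (x - hx) * (Te μ hx * Te μ 0)) := by ring
        _ ≤ Te μ hx * (Te μ 0)⁻¹ * (T2e μ (x - hx) * T2e μ hx) := by gcongr
        _ ≤ Te μ hx * (Te μ 0)⁻¹ * T4 := by gcongr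
    calc Pi4 _ ≤ 4 * Pi4 U1 := hNg4Q
      _ ≤ 4 * (eps hx * T4 + Te μ hx * (Te μ 0)⁻¹ * T4) := by
          gcongr
          exact hQbound.trans (by gcongr)
      _ = 4 * (eps hx + Te μ hx * (Te μ 0)⁻¹) * T4 := by ring

theorem stmt12 (μ ν : Measure ℝ) [IsProbabilityMeasure μ] [IsProbabilityMeasure ν]
    (hμnn : μ (Set.Iio 0) = 0) (hμub : ∀ x : ℝ, 0 < μ (Set.Ioi x))
    (hνnn : ν (Set.Iio 0) = 0) (hνub : ∀ x : ℝ, 0 < ν (Set.Ioi x))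
    (hJ : MemJg μ) (heq : WeakTailEquiv ν μ) :
    MemJg (conv μ ν) := by
  intro g hg0 hgmono hgunb
  obtain ⟨cE, CE, hc0, hcfin, hCfin, hc, hC⟩ :=
    global_compare hμub hνub (by simpa [tail] using heq.1) (by simpa [tail] using heq.2)
  obtain ⟨δ, hδ0, hδfin, hδ⟩ := core μ hμnn hμub g hg0 hgmono hgunb hJ
  have had : Measurable (fun p : ℝ × ℝ => p.1 + p.2) := measurable_fst.add measurable_snd
  haveI : IsProbabilityMeasure (conv μ ν) := by
    unfold conv; exact Measure.isProbabilityMeasure_map had.aemeasurable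
  have hconvprod : (conv μ ν).prod (conv μ ν) =
      Measure.map (Prod.map (fun p : ℝ × ℝ => p.1 + p.2) (fun p : ℝ × ℝ => p.1 + p.2))
        ((μ.prod ν).prod (μ.prod ν)) := by
    unfold conv
    exact Measure.map_prod_map _ _ had had
  have hΦm : Measurable (Prod.map (fun p : ℝ × ℝ => p.1 + p.2) (fun p : ℝ × ℝ => p.1 + p.2)) :=
    had.prodMap had
  -- the two key sets (over 4 coordinates)
  have hEN : ∀ x : ℝ, MeasurableSet {P : (ℝ × ℝ) × (ℝ × ℝ) |
      g x < P.1.1 + P.1.2 ∧ g x < P.2.1 + P.2.2 ∧ x < P.1.1 + P.1.2 + P.2.1 + P.2.2} :=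
    fun x => (mEN1 (g x)).inter ((mEN2 (g x)).inter (mENs x))
  -- numerator and denominator identities
  have hnum_eq : ∀ x : ℝ, ((conv μ ν).prod (conv μ ν))
      ({p : ℝ × ℝ | g x < min p.1 p.2} ∩ {p : ℝ × ℝ | x < p.1 + p.2}) =
      ((μ.prod ν).prod (μ.prod ν)) {P : (ℝ × ℝ) × (ℝ × ℝ) |
        g x < P.1.1 + P.1.2 ∧ g x < P.2.1 + P.2.2 ∧ x < P.1.1 + P.1.2 + P.2.1 + P.2.2} := by
    intro x
    have hsetm : MeasurableSet ({p : ℝ × ℝ | g x < min p.1 p.2} ∩ {p : ℝ × ℝ | x < p.1 + p.2}) :=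
      (measurableSet_lt measurable_const (measurable_fst.min measurable_snd)).inter (msum x)
    rw [hconvprod, Measure.map_apply hΦm hsetm]
    congr 1
    ext ⟨⟨a, b⟩, ⟨c, d⟩⟩
    simp only [mem_preimage, Prod.map, mem_inter_iff, mem_setOf_eq, lt_min_iff]
    constructor
    · rintro ⟨⟨h1, h2⟩, h3⟩; exact ⟨h1, h2, by linarith⟩
    · rintro ⟨h1, h2, h3⟩; exact ⟨⟨h1, h2⟩, by linarith⟩
  have hden_eq : ∀ x : ℝ, ((conv μ ν).prod (conv μ ν)) {p : ℝ × ℝ | x < p.1 + p.2} =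
      ((μ.prod ν).prod (μ.prod ν)) {P : (ℝ × ℝ) × (ℝ × ℝ) |
        x < P.1.1 + P.1.2 + P.2.1 + P.2.2} := by
    intro x
    rw [hconvprod, Measure.map_apply hΦm (msum x)]
    congr 1
    ext ⟨⟨a, b⟩, ⟨c, d⟩⟩
    simp only [mem_preimage, Prod.map, mem_setOf_eq]
    constructor <;> intro h1 <;> linarith
  -- numerator upper bound via swaps
  have hnum_le : ∀ x : ℝ, ((μ.prod ν).prod (μ.prod ν)) {P : (ℝ × ℝ) × (ℝ × ℝ) |
      g x < P.1.1 + P.1.2 ∧ g x < P.2.1 + P.2.2 ∧ x < P.1.1 + P.1.2 + P.2.1 + P.2.2}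
      ≤ CE * CE * (((μ.prod μ).prod (μ.prod μ)) {P : (ℝ × ℝ) × (ℝ × ℝ) |
        g x < P.1.1 + P.1.2 ∧ g x < P.2.1 + P.2.2 ∧ x < P.1.1 + P.1.2 + P.2.1 + P.2.2}) := by
    intro x
    have step1 : ((μ.prod ν).prod (μ.prod ν)) {P : (ℝ × ℝ) × (ℝ × ℝ) |
        g x < P.1.1 + P.1.2 ∧ g x < P.2.1 + P.2.2 ∧ x < P.1.1 + P.1.2 + P.2.1 + P.2.2}
        ≤ CE * ((μ.prod ν).prod (μ.prod μ)) {P : (ℝ × ℝ) × (ℝ × ℝ) |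
          g x < P.1.1 + P.1.2 ∧ g x < P.2.1 + P.2.2 ∧ x < P.1.1 + P.1.2 + P.2.1 + P.2.2} := by
      rw [Measure.prod_apply (hEN x), Measure.prod_apply (hEN x),
        ← lintegral_const_mul CE (measurable_measure_prodMk_left (hEN x))]
      refine lintegral_mono fun p => ?_
      refine swap_le hC μ ((hEN x).preimage measurable_prodMk_left) fun c => ?_
      by_cases hp : g x < p.1 + p.2
      · right
        refine ⟨max (g x - c) (x - p.1 - p.2 - c), ?_⟩
        ext d
        simp only [mem_preimage, mem_setOf_eq, mem_Ioi, max_lt_iff]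
        constructor
        · rintro ⟨h1, h2, h3⟩; exact ⟨by linarith, by linarith⟩
        · rintro ⟨h1, h2⟩; exact ⟨hp, by linarith, by linarith⟩
      · left
        exact Set.eq_empty_iff_forall_notMem.2 fun d hd => hp hd.1
    have step2 : ((μ.prod ν).prod (μ.prod μ)) {P : (ℝ × ℝ) × (ℝ × ℝ) |
        g x < P.1.1 + P.1.2 ∧ g x < P.2.1 + P.2.2 ∧ x < P.1.1 + P.1.2 + P.2.1 + P.2.2}
        ≤ CE * ((μ.prod μ).prod (μ.prod μ)) {P : (ℝ × ℝ) × (ℝ × ℝ) |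
          g x < P.1.1 + P.1.2 ∧ g x < P.2.1 + P.2.2 ∧ x < P.1.1 + P.1.2 + P.2.1 + P.2.2} := by
      rw [Measure.prod_apply_symm (hEN x), Measure.prod_apply_symm (hEN x),
        ← lintegral_const_mul CE (measurable_measure_prodMk_right (hEN x))]
      refine lintegral_mono fun q => ?_
      refine swap_le hC μ ((hEN x).preimage measurable_prodMk_right) fun a => ?_
      by_cases hq : g x < q.1 + q.2
      · right
        refine ⟨max (g x - a) (x - a - q.1 - q.2), ?_⟩
        ext b
        simp only [mem_preimage, mem_setOf_eq, mem_Ioi, max_lt_iff]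
        constructor
        · rintro ⟨h1, h2, h3⟩; exact ⟨by linarith, by linarith⟩
        · rintro ⟨h1, h2⟩; exact ⟨by linarith, hq, by linarith⟩
      · left
        exact Set.eq_empty_iff_forall_notMem.2 fun b hb => hq hb.2.1
    calc ((μ.prod ν).prod (μ.prod ν)) _ ≤ CE * ((μ.prod ν).prod (μ.prod μ)) _ := step1
      _ ≤ CE * (CE * ((μ.prod μ).prod (μ.prod μ)) _) := by gcongr
      _ = CE * CE * ((μ.prod μ).prod (μ.prod μ)) _ := by rw [mul_assoc]
  -- denominator lower bound via swaps
  have hden_ge : ∀ x : ℝ, cE * cE * (((μ.prod μ).prod (μ.prod μ))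
      {P : (ℝ × ℝ) × (ℝ × ℝ) | x < P.1.1 + P.1.2 + P.2.1 + P.2.2})
      ≤ ((μ.prod ν).prod (μ.prod ν)) {P : (ℝ × ℝ) × (ℝ × ℝ) |
        x < P.1.1 + P.1.2 + P.2.1 + P.2.2} := by
    intro x
    have step1 : cE * ((μ.prod ν).prod (μ.prod μ)) {P : (ℝ × ℝ) × (ℝ × ℝ) |
        x < P.1.1 + P.1.2 + P.2.1 + P.2.2}
        ≤ ((μ.prod ν).prod (μ.prod ν)) {P : (ℝ × ℝ) × (ℝ × ℝ) |
          x < P.1.1 + P.1.2 + P.2.1 + P.2.2} := by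
      rw [Measure.prod_apply (mENs x), Measure.prod_apply (mENs x),
        ← lintegral_const_mul cE (measurable_measure_prodMk_left (mENs x))]
      refine lintegral_mono fun p => ?_
      refine swap_ge hc μ ((mENs x).preimage measurable_prodMk_left) fun c => ?_
      right
      refine ⟨x - p.1 - p.2 - c, ?_⟩
      ext d
      simp only [mem_preimage, mem_setOf_eq, mem_Ioi]
      constructor <;> intro h1 <;> linarith
    have step2 : cE * ((μ.prod μ).prod (μ.prod μ)) {P : (ℝ × ℝ) × (ℝ × ℝ) |
        x < P.1.1 + P.1.2 + P.2.1 + P.2.2}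
        ≤ ((μ.prod ν).prod (μ.prod μ)) {P : (ℝ × ℝ) × (ℝ × ℝ) |
          x < P.1.1 + P.1.2 + P.2.1 + P.2.2} := by
      rw [Measure.prod_apply_symm (mENs x), Measure.prod_apply_symm (mENs x),
        ← lintegral_const_mul cE (measurable_measure_prodMk_right (mENs x))]
      refine lintegral_mono fun q => ?_
      refine swap_ge hc μ ((mENs x).preimage measurable_prodMk_right) fun a => ?_
      right
      refine ⟨x - a - q.1 - q.2, ?_⟩
      ext b
      simp only [mem_preimage, mem_setOf_eq, mem_Ioi]
      constructor <;> intro h1 <;> linarith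
    calc cE * cE * ((μ.prod μ).prod (μ.prod μ)) _
        = cE * (cE * ((μ.prod μ).prod (μ.prod μ)) _) := by rw [mul_assoc]
      _ ≤ cE * ((μ.prod ν).prod (μ.prod μ)) _ := by gcongr
      _ ≤ ((μ.prod ν).prod (μ.prod ν)) _ := step1
  -- positivity and finiteness of T4
  have hT4pos : ∀ x : ℝ, 0 < ((μ.prod μ).prod (μ.prod μ))
      {P : (ℝ × ℝ) × (ℝ × ℝ) | x < P.1.1 + P.1.2 + P.2.1 + P.2.2} := by
    intro x
    have hsub : {p : ℝ × ℝ | x < p.1 + p.2} ×ˢ {p : ℝ × ℝ | 0 < p.1 + p.2} ⊆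
        {P : (ℝ × ℝ) × (ℝ × ℝ) | x < P.1.1 + P.1.2 + P.2.1 + P.2.2} := by
      rintro ⟨p, q⟩ ⟨h1, h2⟩
      simp only [mem_setOf_eq] at h1 h2 ⊢
      linarith
    calc (0:ℝ≥0∞) < T2e μ x * T2e μ 0 :=
          ENNReal.mul_pos (T2e_pos μ hμub x).ne' (T2e_pos μ hμub 0).ne'
      _ = ((μ.prod μ).prod (μ.prod μ))
          ({p : ℝ × ℝ | x < p.1 + p.2} ×ˢ {p : ℝ × ℝ | 0 < p.1 + p.2}) :=
          (Measure.prod_prod _ _).symm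
      _ ≤ _ := measure_mono hsub
  -- final squeeze
  have hub : ∀ x : ℝ, condPair (conv μ ν) {p | g x < min p.1 p.2} x ≤
      (CE * CE * δ x).toReal / (cE * cE).toReal := by
    intro x
    have hT4fin : ((μ.prod μ).prod (μ.prod μ))
        {P : (ℝ × ℝ) × (ℝ × ℝ) | x < P.1.1 + P.1.2 + P.2.1 + P.2.2} ≠ ∞ := measure_ne_top _ _
    have hnum : ((conv μ ν).prod (conv μ ν))
        ({p : ℝ × ℝ | g x < min p.1 p.2} ∩ {p : ℝ × ℝ | x < p.1 + p.2})
        ≤ (CE * CE * δ x) * (((μ.prod μ).prod (μ.prod μ))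
          {P : (ℝ × ℝ) × (ℝ × ℝ) | x < P.1.1 + P.1.2 + P.2.1 + P.2.2}) := by
      rw [hnum_eq x]
      calc ((μ.prod ν).prod (μ.prod ν)) _ ≤ CE * CE * (((μ.prod μ).prod (μ.prod μ)) _) :=
            hnum_le x
        _ ≤ CE * CE * (δ x * ((μ.prod μ).prod (μ.prod μ))
            {P : (ℝ × ℝ) × (ℝ × ℝ) | x < P.1.1 + P.1.2 + P.2.1 + P.2.2}) := by
            gcongr
            exact hδ x
        _ = (CE * CE * δ x) * _ := by ring
    have hden : (cE * cE) * (((μ.prod μ).prod (μ.prod μ))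
        {P : (ℝ × ℝ) × (ℝ × ℝ) | x < P.1.1 + P.1.2 + P.2.1 + P.2.2})
        ≤ ((conv μ ν).prod (conv μ ν)) {p : ℝ × ℝ | x < p.1 + p.2} := by
      rw [hden_eq x]; exact hden_ge x
    set T4v := ((μ.prod μ).prod (μ.prod μ))
      {P : (ℝ × ℝ) × (ℝ × ℝ) | x < P.1.1 + P.1.2 + P.2.1 + P.2.2} with hT4v
    have hKfin : CE * CE * δ x ≠ ∞ :=
      ENNReal.mul_ne_top (ENNReal.mul_ne_top hCfin hCfin) (hδfin x)
    have hkfin : cE * cE ≠ ∞ := ENNReal.mul_ne_top hcfin hcfin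
    have hk0 : cE * cE ≠ 0 := (ENNReal.mul_pos hc0.ne' hc0.ne').ne'
    have htR : 0 < T4v.toReal := ENNReal.toReal_pos (hT4pos x).ne' hT4fin
    have hdR : 0 < (cE * cE).toReal * T4v.toReal :=
      mul_pos (ENNReal.toReal_pos hk0 hkfin) htR
    unfold condPair
    have hnumR : (((conv μ ν).prod (conv μ ν))
        ({p : ℝ × ℝ | g x < min p.1 p.2} ∩ {p : ℝ × ℝ | x < p.1 + p.2})).toReal
        ≤ (CE * CE * δ x).toReal * T4v.toReal := by
      rw [← ENNReal.toReal_mul]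
      exact ENNReal.toReal_mono (ENNReal.mul_ne_top hKfin hT4fin) hnum
    have hdenR : (cE * cE).toReal * T4v.toReal ≤
        (((conv μ ν).prod (conv μ ν)) {p : ℝ × ℝ | x < p.1 + p.2}).toReal := by
      rw [← ENNReal.toReal_mul]
      exact ENNReal.toReal_mono (measure_ne_top _ _) hden
    calc _ ≤ ((CE * CE * δ x).toReal * T4v.toReal) / ((cE * cE).toReal * T4v.toReal) :=
          div_le_div₀ (by positivity) hnumR hdR hdenR
      _ = (CE * CE * δ x).toReal / (cE * cE).toReal := by
          rw [mul_div_mul_right _ _ htR.ne']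
  have hlb : ∀ x : ℝ, 0 ≤ condPair (conv μ ν) {p | g x < min p.1 p.2} x :=
    fun x => div_nonneg ENNReal.toReal_nonneg ENNReal.toReal_nonneg
  have hBtend : Tendsto (fun x => (CE * CE * δ x).toReal / (cE * cE).toReal) atTop (nhds 0) := by
    have h1 : Tendsto (fun x => CE * CE * δ x) atTop (nhds 0) := by
      have := ENNReal.Tendsto.const_mul hδ0 (a := CE * CE)
        (Or.inr (ENNReal.mul_ne_top hCfin hCfin))
      simpa using this
    have h2 : Tendsto (fun x => (CE * CE * δ x).toReal) atTop (nhds 0) := by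
      have h2' := (ENNReal.tendsto_toReal (a := 0) (by simp)).comp h1
      simp only [ENNReal.toReal_zero] at h2'
      exact h2'
    simpa using h2.div_const ((cE * cE).toReal)
  exact tendsto_of_tendsto_of_tendsto_of_le_of_le tendsto_const_nhds hBtend hlb hub
end

section
/- Let X, Y be independent nonnegative unbounded random variables both in 𝓙. Then the following are equivalent: (i) X ∨ Y ∈ 𝓙; (ii) X + Y ∈ 𝓙; (iii) any mixture Z with distribution pF_X + (1−p)F_Y for p ∈ (0,1) belongs to 𝓙. -/
open MeasureTheory Filter Set

open scoped ENNReal Classical Topology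

namespace Stmt14Aux

/-- numerator set -/
def Smin (a x : ℝ) : Set (ℝ × ℝ) := {p | a < min p.1 p.2} ∩ {p | x < p.1 + p.2}
/-- denominator set -/
def Ssum (x : ℝ) : Set (ℝ × ℝ) := {p : ℝ × ℝ | x < p.1 + p.2}

noncomputable def Nn (ν : Measure ℝ) (a x : ℝ) : ℝ≥0∞ := (ν.prod ν) (Smin a x)
noncomputable def Dd (ν : Measure ℝ) (x : ℝ) : ℝ≥0∞ := (ν.prod ν) (Ssum x)

lemma msSsum (x : ℝ) : MeasurableSet (Ssum x) :=
  measurableSet_lt measurable_const (measurable_fst.add measurable_snd)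

lemma msSmin (a x : ℝ) : MeasurableSet (Smin a x) :=
  (measurableSet_lt measurable_const (measurable_fst.min measurable_snd)).inter (msSsum x)

lemma sec_sum (κ₁ κ₂ : Measure ℝ) [SFinite κ₂] (x : ℝ) :
    (κ₁.prod κ₂) (Ssum x) = ∫⁻ t, κ₂ (Ioi (x - t)) ∂κ₁ := by
  rw [Measure.prod_apply (msSsum x)]
  refine lintegral_congr fun t => ?_
  congr 1
  ext y
  simp only [Ssum, mem_preimage, mem_setOf_eq, mem_Ioi]
  constructor <;> intro h <;> linarith

lemma sec_min (κ₁ κ₂ : Measure ℝ) [SFinite κ₂] (a x : ℝ) :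
    (κ₁.prod κ₂) (Smin a x)
      = ∫⁻ t, Set.indicator (Ioi a) (fun t => κ₂ (Ioi (max a (x - t)))) t ∂κ₁ := by
  rw [Measure.prod_apply (msSmin a x)]
  refine lintegral_congr fun t => ?_
  by_cases ht : a < t
  · rw [Set.indicator_of_mem (show t ∈ Ioi a from ht)]
    congr 1
    ext y
    simp only [Smin, mem_preimage, mem_inter_iff, mem_setOf_eq, lt_min_iff, mem_Ioi, max_lt_iff]
    constructor
    · rintro ⟨⟨h1, h2⟩, h3⟩; exact ⟨h2, by linarith⟩
    · rintro ⟨h1, h2⟩; exact ⟨⟨ht, h1⟩, by linarith⟩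
  · rw [Set.indicator_of_notMem (show t ∉ Ioi a from ht)]
    have hemp : Prod.mk t ⁻¹' Smin a x = ∅ := by
      ext y
      simp only [Smin, mem_preimage, mem_inter_iff, mem_setOf_eq, lt_min_iff, mem_empty_iff_false,
        iff_false]
      rintro ⟨⟨h1, _⟩, _⟩
      exact ht h1
    rw [hemp, measure_empty]

/-- upper-set measure comparison from tail comparison -/
lemma upperSet_meas_le {ν ρ : Measure ℝ} (hρfin : ρ Set.univ ≠ ∞)
    (h : ∀ u, ν (Ioi u) ≤ ρ (Ioi u)) {E : Set ℝ} (hE : IsUpperSet E) : ν E ≤ ρ E := by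
  rcases E.eq_empty_or_nonempty with rfl | hne
  · simp
  by_cases hbb : BddBelow E
  · set u := sInf E with hu
    have hIoi : Ioi u ⊆ E := by
      intro z hz
      obtain ⟨e, he, hez⟩ := (csInf_lt_iff hbb hne).mp hz
      exact hE hez.le he
    have hIci : E ⊆ Ici u := fun e he => csInf_le hbb he
    by_cases hmem : u ∈ E
    · have hEeq : E = Ici u := subset_antisymm hIci (fun z hz => hE hz hmem)
      rw [hEeq]
      have hanti : Antitone fun n : ℕ => Ioi (u - 1 / (n + 1)) := by
        intro m n hmn
        apply Ioi_subset_Ioi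
        have h1 : (1 : ℝ) / (n + 1) ≤ 1 / (m + 1) := by
          apply one_div_le_one_div_of_le <;> [positivity; exact_mod_cast by omega]
        linarith
      have hInter : ⋂ n : ℕ, Ioi (u - 1 / ((n : ℝ) + 1)) = Ici u := by
        ext z
        simp only [mem_iInter, mem_Ioi, mem_Ici]
        constructor
        · intro hz
          by_contra hzu
          push_neg at hzu
          obtain ⟨n, hn⟩ := exists_nat_one_div_lt (show (0:ℝ) < u - z by linarith)
          have := hz n
          linarith
        · intro hz n
          have : (0:ℝ) < 1 / ((n : ℝ) + 1) := by positivity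
          linarith
      have htend : Tendsto (fun n : ℕ => ρ (Ioi (u - 1 / ((n : ℝ) + 1)))) atTop (𝓝 (ρ (Ici u))) := by
        have h2 := tendsto_measure_iInter_atTop (μ := ρ)
          (fun n => measurableSet_Ioi.nullMeasurableSet) hanti
          ⟨0, ne_top_of_le_ne_top hρfin (measure_mono (subset_univ _))⟩
        rw [hInter] at h2
        exact h2
      refine ge_of_tendsto htend (Eventually.of_forall fun n => ?_)
      calc ν (Ici u) ≤ ν (Ioi (u - 1 / ((n : ℝ) + 1))) := by
            apply measure_mono
            intro z hz
            simp only [mem_Ici] at hz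
            simp only [mem_Ioi]
            have : (0:ℝ) < 1 / ((n : ℝ) + 1) := by positivity
            linarith
        _ ≤ ρ (Ioi (u - 1 / ((n : ℝ) + 1))) := h _
    · have hEeq : E = Ioi u := by
        apply subset_antisymm _ hIoi
        intro z hz
        exact lt_of_le_of_ne (show u ≤ z from hIci hz) (fun hzz => hmem (hzz ▸ hz))
      rw [hEeq]; exact h u
  · have hEeq : E = univ := by
      apply eq_univ_of_forall
      intro z
      have : ∃ e ∈ E, e < z := by
        by_contra hc
        push_neg at hc
        exact hbb ⟨z, fun e he => hc e he⟩
      obtain ⟨e, he, hez⟩ := this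
      exact hE hez.le he
    rw [hEeq]
    have hUn : (⋃ n : ℕ, Ioi (-(n:ℝ))) = univ := by
      apply eq_univ_of_forall
      intro z
      simp only [mem_iUnion, mem_Ioi]
      obtain ⟨n, hn⟩ := exists_nat_gt (-z)
      exact ⟨n, by linarith⟩
    have hmono : Monotone fun n : ℕ => Ioi (-(n:ℝ)) := by
      intro m n hmn
      apply Ioi_subset_Ioi
      simp only [neg_le_neg_iff, Nat.cast_le]
      exact hmn
    have hν : Tendsto (fun n : ℕ => ν (Ioi (-(n:ℝ)))) atTop (𝓝 (ν univ)) := by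
      have h2 := tendsto_measure_iUnion_atTop (μ := ν) hmono
      rw [hUn] at h2
      exact h2
    have hρ : Tendsto (fun n : ℕ => ρ (Ioi (-(n:ℝ)))) atTop (𝓝 (ρ univ)) := by
      have h2 := tendsto_measure_iUnion_atTop (μ := ρ) hmono
      rw [hUn] at h2
      exact h2
    exact le_of_tendsto_of_tendsto' hν hρ fun n => h _

/-- lintegral transfer along monotone functions, with constant -/
lemma lintegral_mono_tail {ν ρ : Measure ℝ} {C : ℝ≥0∞} (hC : C ≠ ∞) (hρfin : ρ Set.univ ≠ ∞)
    (h : ∀ u, ν (Ioi u) ≤ C * ρ (Ioi u)) {f : ℝ → ℝ≥0∞} (hf : Monotone f)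
    (hfin : ∀ t, f t ≠ ∞) : ∫⁻ t, f t ∂ν ≤ C * ∫⁻ t, f t ∂ρ := by
  have hCρfin : (C • ρ) Set.univ ≠ ∞ := by
    simp only [Measure.smul_apply, smul_eq_mul]
    exact ENNReal.mul_ne_top hC hρfin
  have h' : ∀ u, ν (Ioi u) ≤ (C • ρ) (Ioi u) := by
    intro u; simpa [Measure.smul_apply, smul_eq_mul] using h u
  set F : ℝ → ℝ := fun t => (f t).toReal with hF
  have hFmono : Monotone F := fun a b hab =>
    ENNReal.toReal_le_toReal (hfin a) (hfin b) |>.mpr (hf hab)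
  have hFf : ∀ t, ENNReal.ofReal (F t) = f t := fun t => ENNReal.ofReal_toReal (hfin t)
  have hnn : ∀ (μ' : Measure ℝ), (0:ℝ → ℝ) ≤ᵐ[μ'] F :=
    fun μ' => Filter.Eventually.of_forall fun t => ENNReal.toReal_nonneg
  have hmble : ∀ (μ' : Measure ℝ), AEMeasurable F μ' := fun μ' => hFmono.measurable.aemeasurable
  have key : ∀ (μ' : Measure ℝ), ∫⁻ t, f t ∂μ' = ∫⁻ s in Ioi (0:ℝ), μ' {a | s < F a} := by
    intro μ'
    rw [← lintegral_eq_lintegral_meas_lt μ' (hnn μ') (hmble μ')]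
    exact lintegral_congr fun t => (hFf t).symm
  have key2 : ∫⁻ t, f t ∂ν ≤ ∫⁻ t, f t ∂(C • ρ) := by
    rw [key ν, key (C • ρ)]
    refine lintegral_mono fun s => ?_
    exact upperSet_meas_le hCρfin h' (fun a b hab ha => lt_of_lt_of_le ha (hFmono hab))
  calc ∫⁻ t, f t ∂ν ≤ ∫⁻ t, f t ∂(C • ρ) := key2
    _ = C * ∫⁻ t, f t ∂ρ := by rw [lintegral_smul_measure, smul_eq_mul]

/-- product comparison, sum sets -/
lemma prod_sum_le {κ₁ κ₂ ρ₁ ρ₂ : Measure ℝ} [SFinite κ₂] [SFinite ρ₂]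
    {C₁ C₂ : ℝ≥0∞} (hC₁ : C₁ ≠ ∞) (hC₂ : C₂ ≠ ∞)
    (hρ₁fin : ρ₁ Set.univ ≠ ∞) (hρ₂fin : ρ₂ Set.univ ≠ ∞)
    (h1 : ∀ u, κ₁ (Ioi u) ≤ C₁ * ρ₁ (Ioi u)) (h2 : ∀ u, κ₂ (Ioi u) ≤ C₂ * ρ₂ (Ioi u))
    (x : ℝ) : (κ₁.prod κ₂) (Ssum x) ≤ C₁ * C₂ * (ρ₁.prod ρ₂) (Ssum x) := by
  rw [sec_sum, sec_sum]
  have step1 : ∫⁻ t, κ₂ (Ioi (x - t)) ∂κ₁ ≤ ∫⁻ t, C₂ * ρ₂ (Ioi (x - t)) ∂κ₁ :=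
    lintegral_mono fun t => h2 _
  have hmono : Monotone fun t => C₂ * ρ₂ (Ioi (x - t)) := by
    intro a b hab
    exact mul_le_mul_right (measure_mono (Ioi_subset_Ioi (by linarith))) _
  have hfin : ∀ t, C₂ * ρ₂ (Ioi (x - t)) ≠ ∞ :=
    fun t => ENNReal.mul_ne_top hC₂ (ne_top_of_le_ne_top hρ₂fin (measure_mono (subset_univ _)))
  have step2 := lintegral_mono_tail hC₁ hρ₁fin h1 hmono hfin
  calc ∫⁻ t, κ₂ (Ioi (x - t)) ∂κ₁ ≤ ∫⁻ t, C₂ * ρ₂ (Ioi (x - t)) ∂κ₁ := step1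
    _ ≤ C₁ * ∫⁻ t, C₂ * ρ₂ (Ioi (x - t)) ∂ρ₁ := step2
    _ = C₁ * C₂ * ∫⁻ t, ρ₂ (Ioi (x - t)) ∂ρ₁ := by
        rw [lintegral_const_mul' _ _ hC₂, mul_assoc]

/-- product comparison, min∩sum sets -/
lemma prod_min_le {κ₁ κ₂ ρ₁ ρ₂ : Measure ℝ} [SFinite κ₂] [SFinite ρ₂]
    {C₁ C₂ : ℝ≥0∞} (hC₁ : C₁ ≠ ∞) (hC₂ : C₂ ≠ ∞)
    (hρ₁fin : ρ₁ Set.univ ≠ ∞) (hρ₂fin : ρ₂ Set.univ ≠ ∞)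
    (h1 : ∀ u, κ₁ (Ioi u) ≤ C₁ * ρ₁ (Ioi u)) (h2 : ∀ u, κ₂ (Ioi u) ≤ C₂ * ρ₂ (Ioi u))
    (a x : ℝ) : (κ₁.prod κ₂) (Smin a x) ≤ C₁ * C₂ * (ρ₁.prod ρ₂) (Smin a x) := by
  rw [sec_min, sec_min]
  have step1 : ∫⁻ t, Set.indicator (Ioi a) (fun t => κ₂ (Ioi (max a (x - t)))) t ∂κ₁
      ≤ ∫⁻ t, Set.indicator (Ioi a) (fun t => C₂ * ρ₂ (Ioi (max a (x - t)))) t ∂κ₁ := by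
    refine lintegral_mono fun t => ?_
    by_cases ht : t ∈ Ioi a
    · rw [Set.indicator_of_mem ht, Set.indicator_of_mem ht]; exact h2 _
    · rw [Set.indicator_of_notMem ht, Set.indicator_of_notMem ht]
  have hmono : Monotone fun t => Set.indicator (Ioi a) (fun t => C₂ * ρ₂ (Ioi (max a (x - t)))) t := by
    intro s t hst
    dsimp only
    by_cases hs : s ∈ Ioi a
    · have ht : t ∈ Ioi a := lt_of_lt_of_le hs hst
      rw [Set.indicator_of_mem hs, Set.indicator_of_mem ht]
      refine mul_le_mul_right (measure_mono (Ioi_subset_Ioi ?_)) _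
      exact max_le_max le_rfl (by linarith)
    · rw [Set.indicator_of_notMem hs]
      exact zero_le
  have hfin : ∀ t, Set.indicator (Ioi a) (fun t => C₂ * ρ₂ (Ioi (max a (x - t)))) t ≠ ∞ := by
    intro t
    by_cases ht : t ∈ Ioi a
    · rw [Set.indicator_of_mem ht]
      exact ENNReal.mul_ne_top hC₂ (ne_top_of_le_ne_top hρ₂fin (measure_mono (subset_univ _)))
    · rw [Set.indicator_of_notMem ht]; exact ENNReal.zero_ne_top
  have step2 := lintegral_mono_tail hC₁ hρ₁fin h1 hmono hfin
  have step3 : ∫⁻ t, Set.indicator (Ioi a) (fun t => C₂ * ρ₂ (Ioi (max a (x - t)))) t ∂ρ₁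
      = C₂ * ∫⁻ t, Set.indicator (Ioi a) (fun t => ρ₂ (Ioi (max a (x - t)))) t ∂ρ₁ := by
    rw [← lintegral_const_mul' _ _ hC₂]
    refine lintegral_congr fun t => ?_
    by_cases ht : t ∈ Ioi a
    · rw [Set.indicator_of_mem ht, Set.indicator_of_mem ht]
    · rw [Set.indicator_of_notMem ht, Set.indicator_of_notMem ht, mul_zero]
  calc ∫⁻ t, Set.indicator (Ioi a) (fun t => κ₂ (Ioi (max a (x - t)))) t ∂κ₁
      ≤ ∫⁻ t, Set.indicator (Ioi a) (fun t => C₂ * ρ₂ (Ioi (max a (x - t)))) t ∂κ₁ := step1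
    _ ≤ C₁ * ∫⁻ t, Set.indicator (Ioi a) (fun t => C₂ * ρ₂ (Ioi (max a (x - t)))) t ∂ρ₁ := step2
    _ = C₁ * C₂ * ∫⁻ t, Set.indicator (Ioi a) (fun t => ρ₂ (Ioi (max a (x - t)))) t ∂ρ₁ := by
        rw [step3, mul_assoc]

lemma prod_lb (ν : Measure ℝ) [SFinite ν] (a b : ℝ) :
    ν (Ioi a) * ν (Ioi b) ≤ Dd ν (a + b) := by
  rw [Dd, ← Measure.prod_prod]
  apply measure_mono
  rintro ⟨p1, p2⟩ hp
  simp only [mem_prod, mem_Ioi] at hp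
  simp only [Ssum, mem_setOf_eq]
  linarith [hp.1, hp.2]

lemma Dd_pos {ν : Measure ℝ} [SFinite ν] (hub : ∀ u, (0:ℝ≥0∞) < ν (Ioi u)) (x : ℝ) :
    0 < Dd ν x := by
  have h := prod_lb ν (x - 1) 1
  rw [show x - 1 + 1 = x by ring] at h
  exact lt_of_lt_of_le (ENNReal.mul_pos (hub (x-1)).ne' (hub 1).ne') h

lemma Dd_le_cover (ν : Measure ℝ) [IsProbabilityMeasure ν] (K x : ℝ) :
    Dd ν x ≤ Nn ν K x + 2 * ν (Ioi (x - K)) := by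
  have hsub : Ssum x ⊆ Smin K x ∪ ((univ ×ˢ Ioi (x - K)) ∪ (Ioi (x - K) ×ˢ univ)) := by
    rintro ⟨p1, p2⟩ hp
    simp only [Ssum, mem_setOf_eq] at hp
    by_cases h1 : K < p1
    · by_cases h2 : K < p2
      · left
        exact ⟨lt_min h1 h2, hp⟩
      · right; right
        refine ⟨?_, mem_univ _⟩
        simp only [mem_Ioi]
        push_neg at h2
        linarith
    · right; left
      refine ⟨mem_univ _, ?_⟩
      simp only [mem_Ioi]
      push_neg at h1
      linarith
  calc Dd ν x ≤ (ν.prod ν) (Smin K x ∪ ((univ ×ˢ Ioi (x - K)) ∪ (Ioi (x - K) ×ˢ univ))) :=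
        measure_mono hsub
    _ ≤ Nn ν K x + ((ν.prod ν) (univ ×ˢ Ioi (x - K)) + (ν.prod ν) (Ioi (x - K) ×ˢ univ)) :=
        le_trans (measure_union_le _ _) (add_le_add le_rfl (measure_union_le _ _))
    _ = Nn ν K x + 2 * ν (Ioi (x - K)) := by
        rw [Measure.prod_prod, Measure.prod_prod, measure_univ, one_mul, mul_one, two_mul]

lemma memJg_OS {ν : Measure ℝ} [IsProbabilityMeasure ν] (hub : ∀ u, (0:ℝ≥0∞) < ν (Ioi u))
    (hJ : MemJg ν) : ∃ C : ℝ≥0∞, C ≠ ∞ ∧ ∀ᶠ x in atTop, Dd ν x ≤ C * ν (Ioi x) := by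
  classical
  have hstep1 : ∃ K : ℝ, ∀ᶠ x in atTop, Dd ν x ≤ 4 * ν (Ioi (x - K)) := by
    by_contra hc
    push_neg at hc
    have hfreq : ∀ K : ℝ, ∀ b : ℝ, ∃ x, b ≤ x ∧ 4 * ν (Ioi (x - K)) < Dd ν x := by
      intro K b
      have h1 : ∃ᶠ x in atTop, ¬ Dd ν x ≤ 4 * ν (Ioi (x - K)) := (hc K).mono fun x hx => not_le.mpr hx
      obtain ⟨x, hxb, hx⟩ := (frequently_atTop.mp h1) b
      exact ⟨x, hxb, not_le.mp hx⟩
    choose f hf1 hf2 using fun n : ℕ => hfreq (n : ℝ)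
    obtain ⟨xs, hxs0, hxsS⟩ : ∃ xs : ℕ → ℝ, xs 0 = f 0 0 ∧
        ∀ n, xs (n+1) = f (n+1) (max (xs n + 1) ((n:ℝ) + 1)) :=
      ⟨fun n => Nat.rec (f 0 0) (fun n xn => f (n+1) (max (xn + 1) ((n:ℝ) + 1))) n,
        rfl, fun n => rfl⟩
    have hge : ∀ n : ℕ, (n:ℝ) ≤ xs n := by
      intro n
      cases n with
      | zero => simpa [hxs0] using hf1 0 0
      | succ n =>
        rw [hxsS]
        have h2 := hf1 (n+1) (max (xs n + 1) ((n:ℝ)+1))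
        have h3 : ((n:ℝ)+1) ≤ max (xs n + 1) ((n:ℝ)+1) := le_max_right _ _
        push_cast
        linarith
    have hsucc : ∀ n, xs n + 1 ≤ xs (n+1) := by
      intro n
      rw [hxsS]
      exact le_trans (le_max_left _ _) (hf1 _ _)
    have hsm : StrictMono xs := strictMono_nat_of_lt_succ (fun n => by linarith [hsucc n])
    have hbad : ∀ n : ℕ, 4 * ν (Ioi (xs n - n)) < Dd ν (xs n) := by
      intro n
      cases n with
      | zero => rw [hxs0]; simpa using hf2 0 0
      | succ n => rw [hxsS]; exact hf2 _ _
    letI dec : ∀ x : ℝ, DecidablePred fun n : ℕ => xs n ≤ x := fun x n => Real.decidableLE _ _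
    let g : ℝ → ℝ := fun x => ((Nat.findGreatest (fun n : ℕ => xs n ≤ x) ⌈x⌉₊ : ℕ) : ℝ)
    have hg0 : ∀ x, 0 ≤ g x := fun x => Nat.cast_nonneg _
    have hgmono : Monotone g := by
      intro x y hxy
      have h2 := Nat.findGreatest_mono (P := fun n => xs n ≤ x) (Q := fun n => xs n ≤ y)
        (fun n hn => le_trans hn hxy) (Nat.ceil_le_ceil hxy)
      show ((Nat.findGreatest (fun n : ℕ => xs n ≤ x) ⌈x⌉₊ : ℕ) : ℝ)
        ≤ ((Nat.findGreatest (fun n : ℕ => xs n ≤ y) ⌈y⌉₊ : ℕ) : ℝ)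
      exact_mod_cast h2
    have hgeval : ∀ m : ℕ, g (xs m) = m := by
      intro m
      have hmb : m ≤ ⌈xs m⌉₊ := by
        have h1 : (m:ℝ) ≤ xs m := hge m
        calc m = ⌈(m:ℝ)⌉₊ := (Nat.ceil_natCast m).symm
          _ ≤ ⌈xs m⌉₊ := Nat.ceil_le_ceil h1
      have hle : Nat.findGreatest (fun n => xs n ≤ xs m) ⌈xs m⌉₊ ≤ m := by
        have hspec := Nat.findGreatest_spec (P := fun n => xs n ≤ xs m) hmb le_rfl
        exact (hsm.le_iff_le).mp hspec
      have hgem := Nat.le_findGreatest (P := fun n => xs n ≤ xs m) hmb le_rfl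
      show ((Nat.findGreatest (fun n => xs n ≤ xs m) ⌈xs m⌉₊ : ℕ) : ℝ) = m
      exact_mod_cast le_antisymm hle hgem
    have hgub : ∀ M, ∃ x, M < g x := by
      intro M
      refine ⟨xs (⌈M⌉₊ + 1), ?_⟩
      rw [hgeval]
      push_cast
      have := Nat.le_ceil M
      linarith
    have htend := hJ g hg0 hgmono hgub
    have hev : ∀ᶠ x in atTop, condPair ν {p | g x < min p.1 p.2} x < 1/2 :=
      htend.eventually_lt_const (by norm_num)
    obtain ⟨A, hA⟩ := eventually_atTop.mp hev
    set n := ⌈A⌉₊ with hn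
    have hxA : A ≤ xs n := le_trans (Nat.le_ceil A) (hge n)
    have hcp := hA (xs n) hxA
    rw [hgeval n] at hcp
    unfold condPair at hcp
    have hDne : Dd ν (xs n) ≠ ∞ := measure_ne_top _ _
    have hDpos : 0 < Dd ν (xs n) := Dd_pos hub _
    have hdpos : 0 < (Dd ν (xs n)).toReal := ENNReal.toReal_pos hDpos.ne' hDne
    have h4 := hbad n
    have hcov := Dd_le_cover ν ((n:ℕ):ℝ) (xs n)
    have h4r : 4 * (ν (Ioi (xs n - n))).toReal < (Dd ν (xs n)).toReal := by
      have h := (ENNReal.toReal_lt_toReal (ENNReal.mul_ne_top (by norm_num) (measure_ne_top _ _)) hDne).mpr h4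
      rwa [ENNReal.toReal_mul, ENNReal.toReal_ofNat] at h
    have hcovr : (Dd ν (xs n)).toReal
        ≤ (Nn ν ((n:ℕ):ℝ) (xs n)).toReal + 2 * (ν (Ioi (xs n - ↑n))).toReal := by
      have h := (ENNReal.toReal_le_toReal hDne (ENNReal.add_ne_top.mpr
        ⟨measure_ne_top _ _, ENNReal.mul_ne_top (by norm_num) (measure_ne_top _ _)⟩)).mpr hcov
      rwa [ENNReal.toReal_add (measure_ne_top _ _)
        (ENNReal.mul_ne_top (by norm_num) (measure_ne_top _ _)), ENNReal.toReal_mul,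
        ENNReal.toReal_ofNat] at h
    have hhalf : (1:ℝ)/2 ≤ (Nn ν ((n:ℕ):ℝ) (xs n)).toReal / (Dd ν (xs n)).toReal := by
      rw [le_div_iff₀ hdpos]
      linarith
    have hcp' : (Nn ν ((n:ℕ):ℝ) (xs n)).toReal / (Dd ν (xs n)).toReal < 1/2 := hcp
    linarith
  obtain ⟨K, hK⟩ := hstep1
  refine ⟨16 / ν (Ioi (2*K)), (ENNReal.div_lt_top (by norm_num) (hub _).ne').ne, ?_⟩
  have hshift : ∀ᶠ x in atTop, Dd ν (x + K) ≤ 4 * ν (Ioi (x + K - K)) :=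
    (tendsto_atTop_add_const_right atTop K tendsto_id).eventually hK
  filter_upwards [hK, hshift] with x h1 h2
  have h2' : Dd ν (x + K) ≤ 4 * ν (Ioi x) := by rwa [add_sub_cancel_right] at h2
  have hprod : ν (Ioi (x - K)) * ν (Ioi (2*K)) ≤ Dd ν (x + K) := by
    have h3 := prod_lb ν (x - K) (2*K)
    rwa [show x - K + 2*K = x + K by ring] at h3
  have hT : ν (Ioi (x - K)) ≤ 4 * ν (Ioi x) / ν (Ioi (2*K)) := by
    rw [ENNReal.le_div_iff_mul_le (Or.inl (hub _).ne') (Or.inl (measure_ne_top _ _))]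
    exact le_trans hprod h2'
  calc Dd ν x ≤ 4 * ν (Ioi (x - K)) := h1
    _ ≤ 4 * (4 * ν (Ioi x) / ν (Ioi (2*K))) := mul_le_mul_right hT _
    _ = 16 / ν (Ioi (2*K)) * ν (Ioi x) := by
        simp only [div_eq_mul_inv]
        ring

lemma globalize {ν ρ : Measure ℝ} [IsProbabilityMeasure ν] [IsProbabilityMeasure ρ]
    (hub : ∀ u, (0:ℝ≥0∞) < ρ (Ioi u)) {C : ℝ≥0∞} (hC : C ≠ ∞)
    (h : ∀ᶠ x in atTop, ν (Ioi x) ≤ C * ρ (Ioi x)) :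
    ∃ C' : ℝ≥0∞, C' ≠ ∞ ∧ ∀ x, ν (Ioi x) ≤ C' * ρ (Ioi x) := by
  obtain ⟨x₀, h₀⟩ := eventually_atTop.mp h
  refine ⟨C + (ρ (Ioi x₀))⁻¹, ?_, ?_⟩
  · exact ENNReal.add_ne_top.mpr ⟨hC, ENNReal.inv_ne_top.mpr (hub x₀).ne'⟩
  · intro x
    by_cases hx : x₀ ≤ x
    · exact le_trans (h₀ x hx) (mul_le_mul_left le_self_add _)
    · push_neg at hx
      have h1 : ν (Ioi x) ≤ 1 := prob_le_one
      have h2 : (1:ℝ≥0∞) ≤ (ρ (Ioi x₀))⁻¹ * ρ (Ioi x) := by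
        have hmono : ρ (Ioi x₀) ≤ ρ (Ioi x) := measure_mono (Ioi_subset_Ioi hx.le)
        calc (1:ℝ≥0∞) = (ρ (Ioi x₀))⁻¹ * ρ (Ioi x₀) :=
              (ENNReal.inv_mul_cancel (hub x₀).ne' (measure_ne_top _ _)).symm
          _ ≤ (ρ (Ioi x₀))⁻¹ * ρ (Ioi x) := mul_le_mul_right hmono _
      calc ν (Ioi x) ≤ 1 := h1
        _ ≤ (ρ (Ioi x₀))⁻¹ * ρ (Ioi x) := h2
        _ ≤ (C + (ρ (Ioi x₀))⁻¹) * ρ (Ioi x) := mul_le_mul_left le_add_self _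

lemma squeezeJ {ν ρ : Measure ℝ} [IsProbabilityMeasure ν] [IsProbabilityMeasure ρ]
    (hρub : ∀ u, (0:ℝ≥0∞) < ρ (Ioi u)) {C c : ℝ≥0∞} (hC : C ≠ ∞) (hc0 : c ≠ 0) (hc : c ≠ ∞)
    (hdom : ∀ u, ν (Ioi u) ≤ C * ρ (Ioi u))
    (hD : ∀ᶠ x in atTop, c * Dd ρ x ≤ Dd ν x)
    (hJ : MemJg ρ) : MemJg ν := by
  intro g hg0 hgm hgu
  have hJg := hJ g hg0 hgm hgu
  have hkey : ∀ᶠ x in atTop, condPair ν {p | g x < min p.1 p.2} x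
      ≤ ((C*C).toReal / c.toReal) * condPair ρ {p | g x < min p.1 p.2} x := by
    filter_upwards [hD] with x hDx
    have hN : (ν.prod ν) (Smin (g x) x) ≤ C * C * ((ρ.prod ρ) (Smin (g x) x)) :=
      prod_min_le hC hC (measure_ne_top _ _) (measure_ne_top _ _) hdom hdom (g x) x
    have hDρpos : 0 < (Dd ρ x).toReal :=
      ENNReal.toReal_pos (Dd_pos hρub x).ne' (measure_ne_top _ _)
    have hcpos : 0 < c.toReal := ENNReal.toReal_pos hc0 hc
    have hNr : ((ν.prod ν) (Smin (g x) x)).toReal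
        ≤ (C*C).toReal * ((ρ.prod ρ) (Smin (g x) x)).toReal := by
      have h := (ENNReal.toReal_le_toReal (measure_ne_top _ _)
        (ENNReal.mul_ne_top (ENNReal.mul_ne_top hC hC) (measure_ne_top _ _))).mpr hN
      rwa [ENNReal.toReal_mul] at h
    have hDr : c.toReal * (Dd ρ x).toReal ≤ (Dd ν x).toReal := by
      have h := (ENNReal.toReal_le_toReal (ENNReal.mul_ne_top hc (measure_ne_top _ _))
        (measure_ne_top _ _)).mpr hDx
      rwa [ENNReal.toReal_mul] at h
    have e1 : condPair ν {p | g x < min p.1 p.2} x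
        = ((ν.prod ν) (Smin (g x) x)).toReal / (Dd ν x).toReal := rfl
    have e2 : condPair ρ {p | g x < min p.1 p.2} x
        = ((ρ.prod ρ) (Smin (g x) x)).toReal / (Dd ρ x).toReal := rfl
    rw [e1, e2]
    calc ((ν.prod ν) (Smin (g x) x)).toReal / (Dd ν x).toReal
        ≤ ((C*C).toReal * ((ρ.prod ρ) (Smin (g x) x)).toReal) / (c.toReal * (Dd ρ x).toReal) :=
          div_le_div₀ (by positivity) hNr (by positivity) hDr
      _ = ((C*C).toReal / c.toReal) * (((ρ.prod ρ) (Smin (g x) x)).toReal / (Dd ρ x).toReal) :=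
          mul_div_mul_comm _ _ _ _
  have h0 : ∀ᶠ x in atTop, 0 ≤ condPair ν {p | g x < min p.1 p.2} x :=
    Eventually.of_forall fun x => div_nonneg ENNReal.toReal_nonneg ENNReal.toReal_nonneg
  have hlim : Tendsto (fun x => ((C*C).toReal / c.toReal)
      * condPair ρ {p | g x < min p.1 p.2} x) atTop (𝓝 0) := by
    have h2 := hJg.const_mul ((C*C).toReal / c.toReal)
    simpa using h2
  exact squeeze_zero' h0 hkey hlim

end Stmt14Aux

open Stmt14Aux in
theorem stmt14 {Ω : Type*} [MeasurableSpace Ω] (P : Measure Ω) [IsProbabilityMeasure P]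
    (X Y : Ω → ℝ) (hX : Measurable X) (hY : Measurable Y)
    (hXnn : ∀ ω, 0 ≤ X ω) (hYnn : ∀ ω, 0 ≤ Y ω)
    (hXub : ∀ t : ℝ, 0 < P {ω | t < X ω}) (hYub : ∀ t : ℝ, 0 < P {ω | t < Y ω})
    (hind : ProbabilityTheory.IndepFun X Y P)
    (hXJ : MemJg (Measure.map X P)) (hYJ : MemJg (Measure.map Y P)) :
    (MemJg (Measure.map (fun ω => max (X ω) (Y ω)) P)
        ↔ MemJg (Measure.map (fun ω => X ω + Y ω) P)) ∧
    (MemJg (Measure.map (fun ω => X ω + Y ω) P)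
        ↔ ∀ p : ℝ, 0 < p → p < 1 →
            MemJg (ENNReal.ofReal p • Measure.map X P
              + ENNReal.ofReal (1 - p) • Measure.map Y P)) := by
  set α := Measure.map X P with hα
  set β := Measure.map Y P with hβ
  set M := Measure.map (fun ω => max (X ω) (Y ω)) P with hM
  set σ := Measure.map (fun ω => X ω + Y ω) P with hσ
  have hmaxM : Measurable fun ω => max (X ω) (Y ω) := hX.max hY
  have haddM : Measurable fun ω => X ω + Y ω := hX.add hY
  haveI : IsProbabilityMeasure α := Measure.isProbabilityMeasure_map hX.aemeasurable
  haveI : IsProbabilityMeasure β := Measure.isProbabilityMeasure_map hY.aemeasurable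
  haveI : IsProbabilityMeasure M := Measure.isProbabilityMeasure_map hmaxM.aemeasurable
  haveI : IsProbabilityMeasure σ := Measure.isProbabilityMeasure_map haddM.aemeasurable
  have hTα : ∀ u : ℝ, α (Ioi u) = P {ω | u < X ω} := fun u => by
    rw [hα, Measure.map_apply hX measurableSet_Ioi]; rfl
  have hTβ : ∀ u : ℝ, β (Ioi u) = P {ω | u < Y ω} := fun u => by
    rw [hβ, Measure.map_apply hY measurableSet_Ioi]; rfl
  have hTM : ∀ u : ℝ, M (Ioi u) = P {ω | u < max (X ω) (Y ω)} := fun u => by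
    rw [hM, Measure.map_apply hmaxM measurableSet_Ioi]; rfl
  have hTσ : ∀ u : ℝ, σ (Ioi u) = P {ω | u < X ω + Y ω} := fun u => by
    rw [hσ, Measure.map_apply haddM measurableSet_Ioi]; rfl
  have hαub : ∀ u, (0:ℝ≥0∞) < α (Ioi u) := fun u => by rw [hTα]; exact hXub u
  have hβub : ∀ u, (0:ℝ≥0∞) < β (Ioi u) := fun u => by rw [hTβ]; exact hYub u
  have hαM : ∀ u, α (Ioi u) ≤ M (Ioi u) := fun u => by
    rw [hTα, hTM]
    exact measure_mono fun ω h => show u < max (X ω) (Y ω) from lt_of_lt_of_le h (le_max_left _ _)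
  have hβM : ∀ u, β (Ioi u) ≤ M (Ioi u) := fun u => by
    rw [hTβ, hTM]
    exact measure_mono fun ω h => show u < max (X ω) (Y ω) from lt_of_lt_of_le h (le_max_right _ _)
  have hMub : ∀ u, (0:ℝ≥0∞) < M (Ioi u) := fun u => lt_of_lt_of_le (hαub u) (hαM u)
  have hMσ : ∀ u, M (Ioi u) ≤ σ (Ioi u) := fun u => by
    rw [hTM, hTσ]
    refine measure_mono fun ω h => show u < X ω + Y ω from lt_of_lt_of_le h ?_
    exact max_le (le_add_of_nonneg_right (hYnn ω)) (le_add_of_nonneg_left (hXnn ω))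
  have hσub : ∀ u, (0:ℝ≥0∞) < σ (Ioi u) := fun u => lt_of_lt_of_le (hMub u) (hMσ u)
  have hMsum : ∀ u, M (Ioi u) ≤ α (Ioi u) + β (Ioi u) := fun u => by
    rw [hTα, hTβ, hTM]
    calc P {ω | u < max (X ω) (Y ω)} ≤ P ({ω | u < X ω} ∪ {ω | u < Y ω}) := by
          refine measure_mono fun ω h => ?_
          rcases lt_max_iff.mp (show u < max (X ω) (Y ω) from h) with h' | h'
          · exact Or.inl h'
          · exact Or.inr h'
      _ ≤ P {ω | u < X ω} + P {ω | u < Y ω} := measure_union_le _ _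
  -- the law of the sum via independence
  have hσDM : ∀ u, σ (Ioi u) ≤ Dd M u := by
    have hpair : Measure.map (fun ω => (X ω, Y ω)) P = α.prod β :=
      (ProbabilityTheory.indepFun_iff_map_prod_eq_prod_map_map hX.aemeasurable
        hY.aemeasurable).mp hind
    have hσeq : ∀ u : ℝ, σ (Ioi u) = (α.prod β) (Ssum u) := by
      intro u
      have hcomp : σ = Measure.map (fun q : ℝ × ℝ => q.1 + q.2)
          (Measure.map (fun ω => (X ω, Y ω)) P) := by
        rw [Measure.map_map (g := fun q : ℝ × ℝ => q.1 + q.2) (by fun_prop) (hX.prodMk hY)]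
        rfl
      rw [hcomp, hpair, Measure.map_apply (f := fun q : ℝ × ℝ => q.1 + q.2) (by fun_prop) measurableSet_Ioi]
      rfl
    intro u
    rw [hσeq]
    have h := prod_sum_le (κ₁ := α) (κ₂ := β) (ρ₁ := M) (ρ₂ := M) (C₁ := 1) (C₂ := 1)
      ENNReal.one_ne_top ENNReal.one_ne_top
      (measure_ne_top M _) (measure_ne_top M _)
      (fun v => by rw [one_mul]; exact hαM v) (fun v => by rw [one_mul]; exact hβM v) u
    rw [one_mul, one_mul] at h; exact h
  -- the four implications
  have hab : MemJg M → MemJg σ := by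
    intro hJM
    obtain ⟨C, hCne, hCOS⟩ := memJg_OS hMub hJM
    have hev : ∀ᶠ x in atTop, σ (Ioi x) ≤ C * M (Ioi x) :=
      hCOS.mono fun x hx => le_trans (hσDM x) hx
    obtain ⟨C', hC'ne, hdom⟩ := globalize hMub hCne hev
    have hDlow : ∀ᶠ x in atTop, (1:ℝ≥0∞) * Dd M x ≤ Dd σ x := by
      refine Eventually.of_forall fun x => ?_
      rw [one_mul]
      have h := prod_sum_le (κ₁ := M) (κ₂ := M) (ρ₁ := σ) (ρ₂ := σ) (C₁ := 1) (C₂ := 1)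
        ENNReal.one_ne_top ENNReal.one_ne_top
        (measure_ne_top σ _) (measure_ne_top σ _)
        (fun v => by rw [one_mul]; exact hMσ v) (fun v => by rw [one_mul]; exact hMσ v) x
      rw [one_mul, one_mul] at h; exact h
    exact squeezeJ hMub hC'ne one_ne_zero ENNReal.one_ne_top hdom hDlow hJM
  have hba : MemJg σ → MemJg M := by
    intro hJσ
    obtain ⟨C, hCne, hCOS⟩ := memJg_OS hσub hJσ
    have hC1ne : C + 1 ≠ ∞ := ENNReal.add_ne_top.mpr ⟨hCne, ENNReal.one_ne_top⟩
    have hC10 : C + 1 ≠ 0 := (lt_of_lt_of_le zero_lt_one le_add_self).ne'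
    have hev : ∀ᶠ x in atTop, Dd σ x ≤ (C + 1) * Dd M x :=
      hCOS.mono fun x hx =>
        le_trans (le_trans hx (mul_le_mul_right (hσDM x) C)) (mul_le_mul_left le_self_add _)
    have hDlow : ∀ᶠ x in atTop, (C+1)⁻¹ * Dd σ x ≤ Dd M x := by
      refine hev.mono fun x hx => ?_
      calc (C+1)⁻¹ * Dd σ x ≤ (C+1)⁻¹ * ((C+1) * Dd M x) := mul_le_mul_right hx _
        _ = Dd M x := by rw [← mul_assoc, ENNReal.inv_mul_cancel hC10 hC1ne, one_mul]
    have hdom : ∀ u, M (Ioi u) ≤ 1 * σ (Ioi u) := fun u => by rw [one_mul]; exact hMσ u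
    exact squeezeJ hσub ENNReal.one_ne_top (ENNReal.inv_ne_zero.mpr hC1ne)
      (ENNReal.inv_ne_top.mpr hC10) hdom hDlow hJσ
  -- mixture facts (for a given p)
  have hmixfacts : ∀ p : ℝ, 0 < p → p < 1 →
      (IsProbabilityMeasure (ENNReal.ofReal p • α + ENNReal.ofReal (1-p) • β)) := by
    intro p hp hp1
    constructor
    simp only [Measure.add_apply, Measure.smul_apply, smul_eq_mul, measure_univ, mul_one]
    rw [← ENNReal.ofReal_add hp.le (by linarith), show p + (1-p) = 1 by ring,
      ENNReal.ofReal_one]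
  have hcmix : ∀ p : ℝ, 0 < p → p < 1 →
      MemJg M → MemJg (ENNReal.ofReal p • α + ENNReal.ofReal (1-p) • β) := by
    intro p hp hp1 hJM
    set ζ := ENNReal.ofReal p • α + ENNReal.ofReal (1-p) • β with hζ
    haveI := hmixfacts p hp hp1
    set m' := ENNReal.ofReal (min p (1-p)) with hm'
    have hm'0 : m' ≠ 0 := (ENNReal.ofReal_pos.mpr (lt_min hp (by linarith))).ne'
    have hm'top : m' ≠ ∞ := ENNReal.ofReal_ne_top
    have hζtail : ∀ u : ℝ, ζ (Ioi u)
        = ENNReal.ofReal p * α (Ioi u) + ENNReal.ofReal (1-p) * β (Ioi u) := fun u => by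
      simp [hζ, Measure.add_apply, Measure.smul_apply, smul_eq_mul]
    have hζub : ∀ u, (0:ℝ≥0∞) < ζ (Ioi u) := fun u => by
      rw [hζtail]
      exact lt_of_lt_of_le
        (ENNReal.mul_pos (ENNReal.ofReal_pos.mpr hp).ne' (hαub u).ne') le_self_add
    have hζleM : ∀ u, ζ (Ioi u) ≤ 1 * M (Ioi u) := fun u => by
      rw [one_mul, hζtail]
      calc ENNReal.ofReal p * α (Ioi u) + ENNReal.ofReal (1-p) * β (Ioi u)
          ≤ ENNReal.ofReal p * M (Ioi u) + ENNReal.ofReal (1-p) * M (Ioi u) :=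
            add_le_add (mul_le_mul_right (hαM u) _) (mul_le_mul_right (hβM u) _)
        _ = (ENNReal.ofReal p + ENNReal.ofReal (1-p)) * M (Ioi u) := (add_mul _ _ _).symm
        _ = M (Ioi u) := by
            rw [← ENNReal.ofReal_add hp.le (by linarith), show p + (1-p) = 1 by ring,
              ENNReal.ofReal_one, one_mul]
    have hMkey : ∀ u, m' * M (Ioi u) ≤ ζ (Ioi u) := fun u => by
      rw [hζtail]
      calc m' * M (Ioi u) ≤ m' * (α (Ioi u) + β (Ioi u)) := mul_le_mul_right (hMsum u) _
        _ = m' * α (Ioi u) + m' * β (Ioi u) := mul_add _ _ _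
        _ ≤ ENNReal.ofReal p * α (Ioi u) + ENNReal.ofReal (1-p) * β (Ioi u) :=
            add_le_add
              (mul_le_mul_left (ENNReal.ofReal_le_ofReal (min_le_left _ _)) _)
              (mul_le_mul_left (ENNReal.ofReal_le_ofReal (min_le_right _ _)) _)
    have hMleζ : ∀ u, M (Ioi u) ≤ m'⁻¹ * ζ (Ioi u) := fun u => by
      calc M (Ioi u) = m'⁻¹ * (m' * M (Ioi u)) := by
            rw [← mul_assoc, ENNReal.inv_mul_cancel hm'0 hm'top, one_mul]
        _ ≤ m'⁻¹ * ζ (Ioi u) := mul_le_mul_right (hMkey u) _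
    have hDlow : ∀ᶠ x in atTop, (m' * m') * Dd M x ≤ Dd ζ x := by
      refine Eventually.of_forall fun x => ?_
      have h := prod_sum_le (κ₁ := M) (κ₂ := M) (ρ₁ := ζ) (ρ₂ := ζ) (C₁ := m'⁻¹) (C₂ := m'⁻¹)
        (ENNReal.inv_ne_top.mpr hm'0) (ENNReal.inv_ne_top.mpr hm'0)
        (measure_ne_top ζ _) (measure_ne_top ζ _) hMleζ hMleζ x
      calc (m' * m') * Dd M x ≤ (m' * m') * (m'⁻¹ * m'⁻¹ * Dd ζ x) := mul_le_mul_right h _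
        _ = Dd ζ x := by
            rw [show (m' * m') * (m'⁻¹ * m'⁻¹ * Dd ζ x)
              = (m' * m'⁻¹) * (m' * m'⁻¹) * Dd ζ x by ring,
              ENNReal.mul_inv_cancel hm'0 hm'top, one_mul, one_mul]
    exact squeezeJ hMub ENNReal.one_ne_top (mul_ne_zero hm'0 hm'0)
      (ENNReal.mul_ne_top hm'top hm'top) hζleM hDlow hJM
  have hdmix : MemJg (ENNReal.ofReal (1/2:ℝ) • α + ENNReal.ofReal (1-(1/2:ℝ)) • β)
      → MemJg M := by
    intro hJζ
    set p : ℝ := 1/2 with hp'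
    have hp : (0:ℝ) < p := by norm_num
    have hp1 : p < 1 := by norm_num
    set ζ := ENNReal.ofReal p • α + ENNReal.ofReal (1-p) • β with hζ
    haveI := hmixfacts p hp hp1
    set m' := ENNReal.ofReal (min p (1-p)) with hm'
    have hm'0 : m' ≠ 0 := (ENNReal.ofReal_pos.mpr (lt_min hp (by linarith))).ne'
    have hm'top : m' ≠ ∞ := ENNReal.ofReal_ne_top
    have hζtail : ∀ u : ℝ, ζ (Ioi u)
        = ENNReal.ofReal p * α (Ioi u) + ENNReal.ofReal (1-p) * β (Ioi u) := fun u => by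
      simp [hζ, Measure.add_apply, Measure.smul_apply, smul_eq_mul]
    have hζub : ∀ u, (0:ℝ≥0∞) < ζ (Ioi u) := fun u => by
      rw [hζtail]
      exact lt_of_lt_of_le
        (ENNReal.mul_pos (ENNReal.ofReal_pos.mpr hp).ne' (hαub u).ne') le_self_add
    have hζleM : ∀ u, ζ (Ioi u) ≤ 1 * M (Ioi u) := fun u => by
      rw [one_mul, hζtail]
      calc ENNReal.ofReal p * α (Ioi u) + ENNReal.ofReal (1-p) * β (Ioi u)
          ≤ ENNReal.ofReal p * M (Ioi u) + ENNReal.ofReal (1-p) * M (Ioi u) :=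
            add_le_add (mul_le_mul_right (hαM u) _) (mul_le_mul_right (hβM u) _)
        _ = (ENNReal.ofReal p + ENNReal.ofReal (1-p)) * M (Ioi u) := (add_mul _ _ _).symm
        _ = M (Ioi u) := by
            rw [← ENNReal.ofReal_add hp.le (by linarith), show p + (1-p) = 1 by ring,
              ENNReal.ofReal_one, one_mul]
    have hMkey : ∀ u, m' * M (Ioi u) ≤ ζ (Ioi u) := fun u => by
      rw [hζtail]
      calc m' * M (Ioi u) ≤ m' * (α (Ioi u) + β (Ioi u)) := mul_le_mul_right (hMsum u) _
        _ = m' * α (Ioi u) + m' * β (Ioi u) := mul_add _ _ _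
        _ ≤ ENNReal.ofReal p * α (Ioi u) + ENNReal.ofReal (1-p) * β (Ioi u) :=
            add_le_add
              (mul_le_mul_left (ENNReal.ofReal_le_ofReal (min_le_left _ _)) _)
              (mul_le_mul_left (ENNReal.ofReal_le_ofReal (min_le_right _ _)) _)
    have hMleζ : ∀ u, M (Ioi u) ≤ m'⁻¹ * ζ (Ioi u) := fun u => by
      calc M (Ioi u) = m'⁻¹ * (m' * M (Ioi u)) := by
            rw [← mul_assoc, ENNReal.inv_mul_cancel hm'0 hm'top, one_mul]
        _ ≤ m'⁻¹ * ζ (Ioi u) := mul_le_mul_right (hMkey u) _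
    have hDlow : ∀ᶠ x in atTop, (1:ℝ≥0∞) * Dd ζ x ≤ Dd M x := by
      refine Eventually.of_forall fun x => ?_
      rw [one_mul]
      have h := prod_sum_le (κ₁ := ζ) (κ₂ := ζ) (ρ₁ := M) (ρ₂ := M) (C₁ := 1) (C₂ := 1)
        ENNReal.one_ne_top ENNReal.one_ne_top
        (measure_ne_top M _) (measure_ne_top M _) hζleM hζleM x
      simpa [Dd] using h
    exact squeezeJ hζub (ENNReal.inv_ne_top.mpr hm'0) one_ne_zero ENNReal.one_ne_top
      hMleζ hDlow hJζ
  refine ⟨⟨hab, hba⟩, ?_, ?_⟩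
  · intro hJσ p hp hp1
    exact hcmix p hp hp1 (hba hJσ)
  · intro hmix
    exact hab (hdmix (hmix (1/2) (by norm_num) (by norm_num)))
end

section
/- If X and Y are independent nonnegative unbounded random variables whose distributions both belong to 𝓙, then the distribution of the minimum X ∧ Y also belongs to 𝓙. -/
open MeasureTheory Filter Set

lemma indep_prod_prod {Ω : Type*} [MeasurableSpace Ω] (P : Measure Ω) [IsProbabilityMeasure P]
    (X Y : Ω → ℝ) (hX : Measurable X) (hY : Measurable Y)
    (hind : ProbabilityTheory.IndepFun X Y P) {A B : Set (ℝ × ℝ)}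
    (hA : MeasurableSet A) (hB : MeasurableSet B) :
    (P.prod P) {q : Ω × Ω | (X q.1, X q.2) ∈ A ∧ (Y q.1, Y q.2) ∈ B}
      = ((P.map X).prod (P.map X)) A * ((P.map Y).prod (P.map Y)) B := by
  haveI : IsProbabilityMeasure (P.map X) := Measure.isProbabilityMeasure_map hX.aemeasurable
  haveI : IsProbabilityMeasure (P.map Y) := Measure.isProbabilityMeasure_map hY.aemeasurable
  have hΦ : Measurable fun q : Ω × Ω => ((X q.1, X q.2), (Y q.1, Y q.2)) :=
    ((hX.comp measurable_fst).prodMk (hX.comp measurable_snd)).prodMk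
      ((hY.comp measurable_fst).prodMk (hY.comp measurable_snd))
  have hS : MeasurableSet {q : Ω × Ω | (X q.1, X q.2) ∈ A ∧ (Y q.1, Y q.2) ∈ B} :=
    hΦ (hA.prod hB)
  set F : ℝ → ENNReal := fun a => (P.map X) (Prod.mk a ⁻¹' A) with hFdef
  set G : ℝ → ENNReal := fun b => (P.map Y) (Prod.mk b ⁻¹' B) with hGdef
  have hF : Measurable F := measurable_measure_prodMk_left hA
  have hG : Measurable G := measurable_measure_prodMk_left hB
  have hmap : P.map (fun ω => (X ω, Y ω)) = (P.map X).prod (P.map Y) :=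
    (ProbabilityTheory.indepFun_iff_map_prod_eq_prod_map_map hX.aemeasurable
      hY.aemeasurable).mp hind
  calc (P.prod P) {q : Ω × Ω | (X q.1, X q.2) ∈ A ∧ (Y q.1, Y q.2) ∈ B}
      = ∫⁻ ω₁, P (Prod.mk ω₁ ⁻¹' {q : Ω × Ω | (X q.1, X q.2) ∈ A ∧ (Y q.1, Y q.2) ∈ B}) ∂P :=
        Measure.prod_apply hS
    _ = ∫⁻ ω₁, F (X ω₁) * G (Y ω₁) ∂P := by
        refine lintegral_congr fun ω₁ => ?_
        have hset : Prod.mk ω₁ ⁻¹' {q : Ω × Ω | (X q.1, X q.2) ∈ A ∧ (Y q.1, Y q.2) ∈ B}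
            = X ⁻¹' (Prod.mk (X ω₁) ⁻¹' A) ∩ Y ⁻¹' (Prod.mk (Y ω₁) ⁻¹' B) := by
          ext ω₂; simp [Set.mem_preimage]
        rw [hset, hind.measure_inter_preimage_eq_mul _ _ (hA.preimage measurable_prodMk_left)
          (hB.preimage measurable_prodMk_left),
          ← Measure.map_apply hX (hA.preimage measurable_prodMk_left),
          ← Measure.map_apply hY (hB.preimage measurable_prodMk_left)]
    _ = ∫⁻ p : ℝ × ℝ, F p.1 * G p.2 ∂((P.map X).prod (P.map Y)) := by
        rw [← hmap]
        exact (lintegral_map ((hF.comp measurable_fst).mul (hG.comp measurable_snd))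
          (hX.prodMk hY)).symm
    _ = (∫⁻ a, F a ∂(P.map X)) * (∫⁻ b, G b ∂(P.map Y)) :=
        lintegral_prod_mul hF.aemeasurable hG.aemeasurable
    _ = ((P.map X).prod (P.map X)) A * ((P.map Y).prod (P.map Y)) B := by
        rw [Measure.prod_apply hA, Measure.prod_apply hB]


lemma sum_set_meas (μ : Measure ℝ) [IsProbabilityMeasure μ] {x : ℝ} :
    MeasurableSet {p : ℝ × ℝ | x < p.1 + p.2} :=
  measurableSet_lt measurable_const (measurable_fst.add measurable_snd)

lemma min_set_meas {c : ℝ} : MeasurableSet {p : ℝ × ℝ | c < min p.1 p.2} :=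
  measurableSet_lt measurable_const (measurable_fst.min measurable_snd)

lemma dpos (μ : Measure ℝ) [IsProbabilityMeasure μ] (hpos : ∀ t : ℝ, 0 < μ (Set.Ioi t))
    (x : ℝ) : 0 < ((μ.prod μ) {p | x < p.1 + p.2}).toReal := by
  have hsub : (Set.Ioi x) ×ˢ (Set.Ioi (0:ℝ)) ⊆ {p : ℝ × ℝ | x < p.1 + p.2} := by
    rintro ⟨a, b⟩ ⟨ha, hb⟩
    simp only [Set.mem_Ioi] at ha hb
    simpa using by linarith
  have h1 : μ (Set.Ioi x) * μ (Set.Ioi 0) ≤ (μ.prod μ) {p | x < p.1 + p.2} := by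
    rw [← Measure.prod_prod]; exact measure_mono hsub
  have h2 : (0:ENNReal) < μ (Set.Ioi x) * μ (Set.Ioi 0) :=
    ENNReal.mul_pos (hpos x).ne' (hpos 0).ne'
  refine ENNReal.toReal_pos ((lt_of_lt_of_le h2 h1).ne') ?_
  exact measure_ne_top _ _

lemma fst_tail_meas (μ : Measure ℝ) [IsProbabilityMeasure μ] (c : ℝ) :
    (μ.prod μ) {p : ℝ × ℝ | c < p.1} = μ (Set.Ioi c) := by
  have : {p : ℝ × ℝ | c < p.1} = (Set.Ioi c) ×ˢ (Set.univ : Set ℝ) := by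
    ext p; simp [Set.mem_Ioi]
  rw [this, Measure.prod_prod, measure_univ, mul_one]

lemma snd_tail_meas (μ : Measure ℝ) [IsProbabilityMeasure μ] (c : ℝ) :
    (μ.prod μ) {p : ℝ × ℝ | c < p.2} = μ (Set.Ioi c) := by
  have : {p : ℝ × ℝ | c < p.2} = (Set.univ : Set ℝ) ×ˢ (Set.Ioi c) := by
    ext p; simp [Set.mem_Ioi]
  rw [this, Measure.prod_prod, measure_univ, one_mul]

lemma lemA (μ : Measure ℝ) [IsProbabilityMeasure μ] (hpos : ∀ t : ℝ, 0 < μ (Set.Ioi t))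
    (hJ : MemJg μ) :
    ∃ K C : ℝ, 0 < C ∧ ∀ᶠ x in atTop,
      ((μ.prod μ) {p | x < p.1 + p.2}).toReal ≤ C * (μ (Set.Ioi (x - K))).toReal := by
  set dr : ℝ → ℝ := fun x => ((μ.prod μ) {p | x < p.1 + p.2}).toReal with hdr
  set tr : ℝ → ℝ := fun y => (μ (Set.Ioi y)).toReal with htr
  by_contra h
  push_neg at h
  have hstep : ∀ (n : ℕ) (a : ℝ), ∃ x, (a ≤ x ∧ ((n:ℝ)+1) ≤ x) ∧
      8*((n:ℝ)+1) * tr (x - ((n:ℝ)+1)) < dr x := by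
    intro n a
    have hfr := h ((n:ℝ)+1) (8*((n:ℝ)+1)) (by positivity)
    have hfr' : ∃ᶠ x in atTop, 8*((n:ℝ)+1) * tr (x - ((n:ℝ)+1)) < dr x :=
      hfr.mono (fun x hx => hx)
    obtain ⟨x, hx1, hx2⟩ := (frequently_atTop.mp hfr') (max a ((n:ℝ)+1))
    exact ⟨x, ⟨le_trans (le_max_left _ _) hx1, le_trans (le_max_right _ _) hx1⟩, hx2⟩
  choose f hf1 hf2 using hstep
  let u : ℕ → ℝ := fun n => Nat.rec 0 (fun m prev => f m (prev + 1)) n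
  have hu_succ : ∀ n, u (n+1) = f n (u n + 1) := fun n => rfl
  have hgrow : ∀ n, u n + 1 ≤ u (n+1) := fun n => by
    rw [hu_succ]; exact (hf1 n (u n + 1)).1
  have hkey : ∀ n : ℕ, 8*((n:ℝ)+1) * tr (u (n+1) - ((n:ℝ)+1)) < dr (u (n+1)) := fun n => by
    rw [hu_succ]; exact hf2 n (u n + 1)
  have humono : StrictMono u := strictMono_nat_of_lt_succ (fun n => by linarith [hgrow n])
  have hn_le : ∀ n : ℕ, (n:ℝ) ≤ u n := by
    intro n
    cases n with
    | zero =>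
        have h0 : u 0 = 0 := rfl
        simp [h0]
    | succ m =>
        have := (hf1 m (u m + 1)).2
        rw [hu_succ]; push_cast; linarith
  have hbdd : ∀ x : ℝ, BddAbove {n : ℕ | u n ≤ x} := by
    intro x
    exact ⟨⌈x⌉₊, fun n hn =>
      Nat.cast_le.mp (le_trans (le_trans (hn_le n) hn) (Nat.le_ceil x))⟩
  set g : ℝ → ℝ := fun x => ((sSup {n : ℕ | u n ≤ x} : ℕ) : ℝ) with hg
  have g0 : ∀ x, 0 ≤ g x := fun x => Nat.cast_nonneg _
  have gmono : Monotone g := by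
    intro x y hxy
    by_cases hne : {n : ℕ | u n ≤ x}.Nonempty
    · exact Nat.cast_le.mpr (csSup_le_csSup (hbdd y) hne (fun n hn => le_trans hn hxy))
    · rw [Set.not_nonempty_iff_eq_empty] at hne
      simp only [hg, hne, csSup_empty]
      exact_mod_cast bot_le
  have gub : ∀ M, ∃ x, M < g x := by
    intro M
    obtain ⟨m, hm⟩ := exists_nat_gt M
    refine ⟨u m, lt_of_lt_of_le hm ?_⟩
    exact Nat.cast_le.mpr (le_csSup (hbdd _) (le_refl (u m)))
  have gval : ∀ n, g (u n) ≤ (n:ℝ) := by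
    intro n
    refine Nat.cast_le.mpr (csSup_le ⟨n, le_refl (u n)⟩ (fun k hk => ?_))
    by_contra hkn
    push_neg at hkn
    exact absurd hk (not_le.mpr (humono hkn))
  have htend := hJ g g0 gmono gub
  have hev : ∀ᶠ x in atTop, condPair μ {p | g x < min p.1 p.2} x < 1/2 :=
    htend.eventually_lt_const (by norm_num)
  obtain ⟨x0, hx0⟩ := eventually_atTop.mp hev
  obtain ⟨m, hm⟩ := exists_nat_ge x0
  set x : ℝ := u (m+1) with hxdef
  have hxx0 : x0 ≤ x := by
    have h1 := hn_le (m+1)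
    have : (m:ℝ) ≤ ((m+1 : ℕ):ℝ) := by push_cast; linarith
    linarith [hm, le_trans this h1]
  have hcond := hx0 x hxx0
  -- lower bound for the conditional probability at x
  set v : ℝ := g x with hv
  have hvm : v ≤ (m:ℝ)+1 := by
    have := gval (m+1); push_cast at this; exact this
  set A : Set (ℝ × ℝ) := {p | v < min p.1 p.2} with hA
  set S : Set (ℝ × ℝ) := {p | x < p.1 + p.2} with hS
  set c : ℝ := x - ((m:ℝ)+1) with hc
  have hsub : S ⊆ (A ∩ S) ∪ ({p : ℝ × ℝ | c < p.1} ∪ {p : ℝ × ℝ | c < p.2}) := by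
    intro p hp
    have hp' : x < p.1 + p.2 := hp
    by_cases hAp : v < min p.1 p.2
    · exact Or.inl ⟨hAp, hp⟩
    · push_neg at hAp
      rcases min_le_iff.mp hAp with h1 | h1
      · exact Or.inr (Or.inr (show c < p.2 by rw [hc]; linarith))
      · exact Or.inr (Or.inl (show c < p.1 by rw [hc]; linarith))
  have hEN : (μ.prod μ) S ≤ (μ.prod μ) (A ∩ S) + (μ (Set.Ioi c) + μ (Set.Ioi c)) := by
    calc (μ.prod μ) S ≤ (μ.prod μ) ((A ∩ S) ∪ ({p : ℝ × ℝ | c < p.1} ∪ {p : ℝ × ℝ | c < p.2})) :=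
          measure_mono hsub
      _ ≤ (μ.prod μ) (A ∩ S) + (μ.prod μ) ({p : ℝ × ℝ | c < p.1} ∪ {p : ℝ × ℝ | c < p.2}) :=
          measure_union_le _ _
      _ ≤ (μ.prod μ) (A ∩ S) + ((μ.prod μ) {p : ℝ × ℝ | c < p.1} + (μ.prod μ) {p : ℝ × ℝ | c < p.2}) := by
          gcongr; exact measure_union_le _ _
      _ = (μ.prod μ) (A ∩ S) + (μ (Set.Ioi c) + μ (Set.Ioi c)) := by
          rw [fst_tail_meas, snd_tail_meas]
  set nr : ℝ := ((μ.prod μ) (A ∩ S)).toReal with hnr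
  have hreal : dr x ≤ nr + (tr c + tr c) := by
    have h1 := ENNReal.toReal_mono (by finiteness) hEN
    rwa [ENNReal.toReal_add (measure_ne_top _ _) (by finiteness),
      ENNReal.toReal_add (measure_ne_top _ _) (measure_ne_top _ _)] at h1
  have hkeym := hkey m
  rw [← hxdef, ← hc] at hkeym
  have htrnn : 0 ≤ tr c := ENNReal.toReal_nonneg
  have hdrpos : 0 < dr x := dpos μ hpos x
  have hm1 : (1:ℝ) ≤ (m:ℝ)+1 := by
    have : (0:ℝ) ≤ (m:ℝ) := Nat.cast_nonneg m
    linarith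
  have h8 : 8 * tr c ≤ 8*((m:ℝ)+1) * tr c := by nlinarith
  have heq : condPair μ A x = nr / dr x := rfl
  rw [heq] at hcond
  have hge : 3/4 ≤ nr / dr x := by
    rw [le_div_iff₀ hdrpos]
    linarith
  linarith

theorem stmt15 {Ω : Type*} [MeasurableSpace Ω] (P : Measure Ω) [IsProbabilityMeasure P]
    (X Y : Ω → ℝ) (hX : Measurable X) (hY : Measurable Y)
    (hXnn : ∀ ω, 0 ≤ X ω) (hYnn : ∀ ω, 0 ≤ Y ω)
    (hXub : ∀ t : ℝ, 0 < P {ω | t < X ω}) (hYub : ∀ t : ℝ, 0 < P {ω | t < Y ω})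
    (hind : ProbabilityTheory.IndepFun X Y P)
    (hXJ : MemJg (Measure.map X P)) (hYJ : MemJg (Measure.map Y P)) :
    MemJg (Measure.map (fun ω => min (X ω) (Y ω)) P) := by
  classical
  set m : Ω → ℝ := fun ω => min (X ω) (Y ω) with hmdef
  have hmmeas : Measurable m := hX.min hY
  set μ : Measure ℝ := Measure.map X P with hμ
  set ν : Measure ℝ := Measure.map Y P with hν
  set ρ : Measure ℝ := Measure.map m P with hρ
  haveI hPμ : IsProbabilityMeasure μ := Measure.isProbabilityMeasure_map hX.aemeasurable
  haveI hPν : IsProbabilityMeasure ν := Measure.isProbabilityMeasure_map hY.aemeasurable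
  haveI hPρ : IsProbabilityMeasure ρ := Measure.isProbabilityMeasure_map hmmeas.aemeasurable
  have hμpos : ∀ t : ℝ, 0 < μ (Set.Ioi t) := by
    intro t
    rw [hμ, Measure.map_apply hX measurableSet_Ioi]
    exact hXub t
  have hνpos : ∀ t : ℝ, 0 < ν (Set.Ioi t) := by
    intro t
    rw [hν, Measure.map_apply hY measurableSet_Ioi]
    exact hYub t
  have hρt : ∀ t : ℝ, ρ (Set.Ioi t) = μ (Set.Ioi t) * ν (Set.Ioi t) := by
    intro t
    rw [hρ, Measure.map_apply hmmeas measurableSet_Ioi]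
    have hset : m ⁻¹' Set.Ioi t = X ⁻¹' Set.Ioi t ∩ Y ⁻¹' Set.Ioi t := by
      ext ω; simp [hmdef, lt_min_iff, Set.mem_Ioi]
    rw [hset, hind.measure_inter_preimage_eq_mul _ _ measurableSet_Ioi measurableSet_Ioi,
      hμ, hν, Measure.map_apply hX measurableSet_Ioi, Measure.map_apply hY measurableSet_Ioi]
  have hρpos : ∀ t : ℝ, 0 < ρ (Set.Ioi t) := fun t => by
    rw [hρt]; exact ENNReal.mul_pos (hμpos t).ne' (hνpos t).ne'
  obtain ⟨K₁, C₁, hC₁, hev1⟩ := lemA μ hμpos hXJ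
  obtain ⟨K₂, C₂, hC₂, hev2⟩ := lemA ν hνpos hYJ
  set L : ℝ := max K₁ K₂ with hL
  set rL : ℝ := (ρ (Set.Ioi L)).toReal with hrL
  have hrLpos : 0 < rL := ENNReal.toReal_pos (hρpos L).ne' (measure_ne_top _ _)
  intro g hg0 hgm hgu
  have hεX := hXJ g hg0 hgm hgu
  have hεY := hYJ g hg0 hgm hgu
  have hB : Tendsto (fun x => condPair μ {p | g x < min p.1 p.2} x *
      condPair ν {p | g x < min p.1 p.2} x * (C₁ * C₂ / rL)) atTop (nhds 0) := by
    have h0 := (hεX.mul hεY).mul_const (C₁ * C₂ / rL)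
    simpa using h0
  refine squeeze_zero' (Filter.Eventually.of_forall (fun x =>
    div_nonneg ENNReal.toReal_nonneg ENNReal.toReal_nonneg)) ?_ hB
  filter_upwards [hev1, hev2] with x h1 h2
  set A' : Set (ℝ × ℝ) := {p | g x < min p.1 p.2} with hA'
  set S' : Set (ℝ × ℝ) := {p | x < p.1 + p.2} with hS'
  have hASmeas : MeasurableSet (A' ∩ S') :=
    min_set_meas.inter (measurableSet_lt measurable_const (measurable_fst.add measurable_snd))
  -- numerator bound
  have hprodmap : ρ.prod ρ = Measure.map (Prod.map m m) (P.prod P) := by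
    rw [hρ]; exact Measure.map_prod_map P P hmmeas hmmeas
  have hNum : (ρ.prod ρ) (A' ∩ S') ≤ (μ.prod μ) (A' ∩ S') * (ν.prod ν) (A' ∩ S') := by
    rw [hprodmap, Measure.map_apply (hmmeas.prodMap hmmeas) hASmeas]
    have hsubE : (Prod.map m m) ⁻¹' (A' ∩ S') ⊆
        {q : Ω × Ω | (X q.1, X q.2) ∈ A' ∩ S' ∧ (Y q.1, Y q.2) ∈ A' ∩ S'} := by
      intro q hq
      have h1' : g x < min (m q.1) (m q.2) := hq.1
      have h2' : x < m q.1 + m q.2 := hq.2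
      obtain ⟨ha, hb⟩ := lt_min_iff.mp h1'
      have e1X : m q.1 ≤ X q.1 := min_le_left _ _
      have e2X : m q.2 ≤ X q.2 := min_le_left _ _
      have e1Y : m q.1 ≤ Y q.1 := min_le_right _ _
      have e2Y : m q.2 ≤ Y q.2 := min_le_right _ _
      exact ⟨⟨lt_min_iff.mpr ⟨lt_of_lt_of_le ha e1X, lt_of_lt_of_le hb e2X⟩,
          show x < X q.1 + X q.2 by linarith⟩,
        ⟨lt_min_iff.mpr ⟨lt_of_lt_of_le ha e1Y, lt_of_lt_of_le hb e2Y⟩,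
          show x < Y q.1 + Y q.2 by linarith⟩⟩
    calc (P.prod P) ((Prod.map m m) ⁻¹' (A' ∩ S'))
        ≤ (P.prod P) {q : Ω × Ω | (X q.1, X q.2) ∈ A' ∩ S' ∧ (Y q.1, Y q.2) ∈ A' ∩ S'} :=
          measure_mono hsubE
      _ = (μ.prod μ) (A' ∩ S') * (ν.prod ν) (A' ∩ S') := by
          rw [indep_prod_prod P X Y hX hY hind hASmeas hASmeas, ← hμ, ← hν]
  -- denominator bound
  have hDen : ρ (Set.Ioi (x - L)) * ρ (Set.Ioi L) ≤ (ρ.prod ρ) S' := by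
    rw [← Measure.prod_prod]
    refine measure_mono ?_
    rintro ⟨a, b⟩ ⟨haa, hbb⟩
    simp only [Set.mem_Ioi] at haa hbb
    simp only [hS', Set.mem_setOf_eq]
    linarith
  -- pass to real numbers
  set NρR : ℝ := ((ρ.prod ρ) (A' ∩ S')).toReal with hNρR
  set DρR : ℝ := ((ρ.prod ρ) S').toReal with hDρR
  set aμ : ℝ := ((μ.prod μ) (A' ∩ S')).toReal with haμ
  set aν : ℝ := ((ν.prod ν) (A' ∩ S')).toReal with haν
  set dμ : ℝ := ((μ.prod μ) S').toReal with hdμ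
  set dν : ℝ := ((ν.prod ν) S').toReal with hdν
  set pμ : ℝ := (μ (Set.Ioi (x - L))).toReal with hpμ
  set pν : ℝ := (ν (Set.Ioi (x - L))).toReal with hpν
  have hpμpos : 0 < pμ := ENNReal.toReal_pos (hμpos _).ne' (measure_ne_top _ _)
  have hpνpos : 0 < pν := ENNReal.toReal_pos (hνpos _).ne' (measure_ne_top _ _)
  have hdμpos : 0 < dμ := dpos μ hμpos x
  have hdνpos : 0 < dν := dpos ν hνpos x
  have hDρpos : 0 < DρR := dpos ρ hρpos x
  have hNumR : NρR ≤ aμ * aν := by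
    have := ENNReal.toReal_mono (by finiteness) hNum
    rwa [ENNReal.toReal_mul] at this
  have hDenR : pμ * pν * rL ≤ DρR := by
    have h3 := ENNReal.toReal_mono (measure_ne_top _ _) hDen
    rw [ENNReal.toReal_mul] at h3
    have h4 : (ρ (Set.Ioi (x - L))).toReal = pμ * pν := by
      rw [hρt, ENNReal.toReal_mul]
    rw [h4] at h3
    exact h3
  -- ε identities
  have hεXeq : aμ = condPair μ A' x * dμ := by
    have : condPair μ A' x = aμ / dμ := rfl
    rw [this, div_mul_cancel₀ _ hdμpos.ne']
  have hεYeq : aν = condPair ν A' x * dν := by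
    have : condPair ν A' x = aν / dν := rfl
    rw [this, div_mul_cancel₀ _ hdνpos.ne']
  have hεXnn : 0 ≤ condPair μ A' x := div_nonneg ENNReal.toReal_nonneg ENNReal.toReal_nonneg
  have hεYnn : 0 ≤ condPair ν A' x := div_nonneg ENNReal.toReal_nonneg ENNReal.toReal_nonneg
  -- tail monотone bounds
  have hdμble : dμ ≤ C₁ * pμ := by
    refine le_trans h1 ?_
    have : (μ (Set.Ioi (x - K₁))).toReal ≤ pμ := by
      refine ENNReal.toReal_mono (measure_ne_top _ _) (measure_mono ?_)
      have hK₁L : K₁ ≤ L := le_max_left K₁ K₂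
      exact Set.Ioi_subset_Ioi (sub_le_sub_left hK₁L x)
    exact mul_le_mul_of_nonneg_left this hC₁.le
  have hdνble : dν ≤ C₂ * pν := by
    refine le_trans h2 ?_
    have : (ν (Set.Ioi (x - K₂))).toReal ≤ pν := by
      refine ENNReal.toReal_mono (measure_ne_top _ _) (measure_mono ?_)
      have hK₂L : K₂ ≤ L := le_max_right K₁ K₂
      exact Set.Ioi_subset_Ioi (sub_le_sub_left hK₂L x)
    exact mul_le_mul_of_nonneg_left this hC₂.le
  -- put everything together
  have hcondρ : condPair ρ A' x = NρR / DρR := rfl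
  rw [hcondρ]
  have hM : NρR ≤ (condPair μ A' x * (C₁ * pμ)) * (condPair ν A' x * (C₂ * pν)) := by
    refine le_trans hNumR ?_
    have hb1 : aμ ≤ condPair μ A' x * (C₁ * pμ) := by
      rw [hεXeq]; exact mul_le_mul_of_nonneg_left hdμble hεXnn
    have hb2 : aν ≤ condPair ν A' x * (C₂ * pν) := by
      rw [hεYeq]; exact mul_le_mul_of_nonneg_left hdνble hεYnn
    exact mul_le_mul hb1 hb2 (by rw [hεYeq]; positivity) (by positivity)
  have hfinal : NρR / DρR ≤
      ((condPair μ A' x * (C₁ * pμ)) * (condPair ν A' x * (C₂ * pν))) / (pμ * pν * rL) :=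
    div_le_div₀ (by positivity) hM (by positivity) hDenR
  refine le_trans hfinal (le_of_eq ?_)
  field_simp
end

section
/- Let X, Y be independent nonnegative random variables. For any nonnegative unbounded nondecreasing g, limsup_{x→∞} P(X₁+X₂>x, min(X₁,X₂)>g(x)) / P(Y₁+Y₂>x, min(Y₁,Y₂)>g(x)) ≤ (limsup_{x→∞} F̄(x)/Ḡ(x))², where X₁,X₂ are i.i.d. copies of X and Y₁,Y₂ i.i.d. copies of Y, with distributions F and G respectively. -/
open MeasureTheory Filter Set
open scoped ENNReal Topology

lemma sec_eq (x t0 s : ℝ) (hs : t0 < s) :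
    {t : ℝ | x < t + s ∧ t0 < min t s} = Set.Ioi (max t0 (x - s)) := by
  ext t
  simp only [Set.mem_setOf_eq, Set.mem_Ioi, lt_min_iff, max_lt_iff, sub_lt_iff_lt_add]
  constructor
  · rintro ⟨h1, h2, -⟩; exact ⟨h2, h1⟩
  · rintro ⟨h1, h2⟩; exact ⟨h2, h1, hs⟩

lemma sec_empty (x t0 s : ℝ) (hs : ¬ t0 < s) :
    {t : ℝ | x < t + s ∧ t0 < min t s} = ∅ := by
  ext t
  simp only [Set.mem_setOf_eq, Set.mem_empty_iff_false, iff_false, lt_min_iff]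
  tauto

lemma key (μ ν : Measure ℝ) (c : ℝ≥0∞) (T : ℝ)
    (hc : ∀ t, T ≤ t → μ (Set.Ioi t) ≤ c * ν (Set.Ioi t))
    (x t0 s : ℝ) (hT : T ≤ t0) :
    μ {t | x < t + s ∧ t0 < min t s} ≤ c * ν {t | x < t + s ∧ t0 < min t s} := by
  by_cases hs : t0 < s
  · rw [sec_eq x t0 s hs]; exact hc _ (hT.trans (le_max_left _ _))
  · rw [sec_empty x t0 s hs]; simp

lemma A_meas (a b : ℝ) : MeasurableSet {p : ℝ × ℝ | a < p.1 + p.2 ∧ b < min p.1 p.2} := by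
  have h1 : MeasurableSet {p : ℝ × ℝ | a < p.1 + p.2} :=
    measurableSet_lt measurable_const (measurable_fst.add measurable_snd)
  have h2 : MeasurableSet {p : ℝ × ℝ | b < min p.1 p.2} :=
    measurableSet_lt measurable_const (measurable_fst.min measurable_snd)
  exact h1.inter h2

lemma prod_le_left (μ ν τ : Measure ℝ) [SFinite μ] [SFinite ν] [SFinite τ]
    (c : ℝ≥0∞) (hctop : c ≠ ⊤) (T : ℝ)
    (hc : ∀ t, T ≤ t → μ (Set.Ioi t) ≤ c * ν (Set.Ioi t))
    (x t0 : ℝ) (hT : T ≤ t0) :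
    (μ.prod τ) {p : ℝ × ℝ | x < p.1 + p.2 ∧ t0 < min p.1 p.2}
      ≤ c * (ν.prod τ) {p : ℝ × ℝ | x < p.1 + p.2 ∧ t0 < min p.1 p.2} := by
  rw [Measure.prod_apply_symm (A_meas x t0), Measure.prod_apply_symm (A_meas x t0)]
  have hsec : ∀ (ρ : Measure ℝ) (s : ℝ),
      ρ ((fun t => (t, s)) ⁻¹' {p : ℝ × ℝ | x < p.1 + p.2 ∧ t0 < min p.1 p.2})
        = ρ {t : ℝ | x < t + s ∧ t0 < min t s} := fun ρ s => rfl
  calc ∫⁻ s, μ ((fun t => (t, s)) ⁻¹' {p : ℝ × ℝ | x < p.1 + p.2 ∧ t0 < min p.1 p.2}) ∂τ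
      ≤ ∫⁻ s, c * ν ((fun t => (t, s)) ⁻¹' {p : ℝ × ℝ | x < p.1 + p.2 ∧ t0 < min p.1 p.2}) ∂τ := by
        refine lintegral_mono fun s => ?_
        rw [hsec, hsec]
        exact key μ ν c T hc x t0 s hT
    _ = c * ∫⁻ s, ν ((fun t => (t, s)) ⁻¹' {p : ℝ × ℝ | x < p.1 + p.2 ∧ t0 < min p.1 p.2}) ∂τ :=
        lintegral_const_mul' _ _ hctop

lemma prod_le_right (μ ν τ : Measure ℝ) [SFinite μ] [SFinite ν] [SFinite τ]
    (c : ℝ≥0∞) (hctop : c ≠ ⊤) (T : ℝ)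
    (hc : ∀ t, T ≤ t → μ (Set.Ioi t) ≤ c * ν (Set.Ioi t))
    (x t0 : ℝ) (hT : T ≤ t0) :
    (τ.prod μ) {p : ℝ × ℝ | x < p.1 + p.2 ∧ t0 < min p.1 p.2}
      ≤ c * (τ.prod ν) {p : ℝ × ℝ | x < p.1 + p.2 ∧ t0 < min p.1 p.2} := by
  rw [Measure.prod_apply (A_meas x t0), Measure.prod_apply (A_meas x t0)]
  have hsec : ∀ (ρ : Measure ℝ) (t : ℝ),
      ρ (Prod.mk t ⁻¹' {p : ℝ × ℝ | x < p.1 + p.2 ∧ t0 < min p.1 p.2})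
        = ρ {s : ℝ | x < s + t ∧ t0 < min s t} := by
    intro ρ t
    congr 1
    ext s
    simp only [Set.mem_preimage, Set.mem_setOf_eq]
    rw [add_comm t s, min_comm t s]
  calc ∫⁻ t, μ (Prod.mk t ⁻¹' {p : ℝ × ℝ | x < p.1 + p.2 ∧ t0 < min p.1 p.2}) ∂τ
      ≤ ∫⁻ t, c * ν (Prod.mk t ⁻¹' {p : ℝ × ℝ | x < p.1 + p.2 ∧ t0 < min p.1 p.2}) ∂τ := by
        refine lintegral_mono fun t => ?_
        rw [hsec, hsec]
        exact key μ ν c T hc x t0 t hT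
    _ = c * ∫⁻ t, ν (Prod.mk t ⁻¹' {p : ℝ × ℝ | x < p.1 + p.2 ∧ t0 < min p.1 p.2}) ∂τ :=
        lintegral_const_mul' _ _ hctop

theorem stmt16 (μ ν : Measure ℝ) [IsProbabilityMeasure μ] [IsProbabilityMeasure ν]
    (hμnn : μ (Set.Iio 0) = 0) (hμub : ∀ x : ℝ, 0 < μ (Set.Ioi x))
    (hνnn : ν (Set.Iio 0) = 0) (hνub : ∀ x : ℝ, 0 < ν (Set.Ioi x))
    (g : ℝ → ℝ) (hg0 : ∀ x, 0 ≤ g x) (hgmono : Monotone g) (hgub : ∀ M, ∃ x, M < g x) :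
    limsup (fun x : ℝ =>
        (μ.prod μ) {p | x < p.1 + p.2 ∧ g x < min p.1 p.2}
          / (ν.prod ν) {p | x < p.1 + p.2 ∧ g x < min p.1 p.2}) atTop
      ≤ (limsup (fun x : ℝ => μ (Set.Ioi x) / ν (Set.Ioi x)) atTop) ^ 2 := by
  set L := limsup (fun x : ℝ => μ (Set.Ioi x) / ν (Set.Ioi x)) atTop with hL
  by_cases hLtop : L = ⊤
  · calc limsup (fun x : ℝ =>
        (μ.prod μ) {p | x < p.1 + p.2 ∧ g x < min p.1 p.2}
          / (ν.prod ν) {p | x < p.1 + p.2 ∧ g x < min p.1 p.2}) atTop ≤ ⊤ := le_top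
      _ = L ^ 2 := by rw [hLtop, ENNReal.top_pow two_ne_zero]
  -- main step: bound by c^2 for every c > L with c ≠ ⊤
  have hstep : ∀ c : ℝ≥0∞, L < c → c ≠ ⊤ →
      limsup (fun x : ℝ =>
        (μ.prod μ) {p | x < p.1 + p.2 ∧ g x < min p.1 p.2}
          / (ν.prod ν) {p | x < p.1 + p.2 ∧ g x < min p.1 p.2}) atTop ≤ c ^ 2 := by
    intro c hc hctop
    have hev : ∀ᶠ t in atTop, μ (Set.Ioi t) / ν (Set.Ioi t) < c :=
      eventually_lt_of_limsup_lt hc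
    obtain ⟨T, hT⟩ := eventually_atTop.mp hev
    have hcmp : ∀ t, T ≤ t → μ (Set.Ioi t) ≤ c * ν (Set.Ioi t) := by
      intro t ht
      exact le_of_lt ((ENNReal.div_lt_iff (Or.inl (hνub t).ne')
        (Or.inl (measure_ne_top ν _))).mp (hT t ht))
    obtain ⟨x0, hx0⟩ := hgub T
    refine limsup_le_of_le (by isBoundedDefault) ?_
    filter_upwards [eventually_ge_atTop x0] with x hx
    have hTg : T ≤ g x := (le_of_lt hx0).trans (hgmono hx)
    have h1 := prod_le_left μ ν μ c hctop T hcmp x (g x) hTg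
    have h2 := prod_le_right μ ν ν c hctop T hcmp x (g x) hTg
    have hN : (μ.prod μ) {p : ℝ × ℝ | x < p.1 + p.2 ∧ g x < min p.1 p.2}
        ≤ c ^ 2 * (ν.prod ν) {p : ℝ × ℝ | x < p.1 + p.2 ∧ g x < min p.1 p.2} := by
      calc (μ.prod μ) {p : ℝ × ℝ | x < p.1 + p.2 ∧ g x < min p.1 p.2}
          ≤ c * (ν.prod μ) {p : ℝ × ℝ | x < p.1 + p.2 ∧ g x < min p.1 p.2} := h1
        _ ≤ c * (c * (ν.prod ν) {p : ℝ × ℝ | x < p.1 + p.2 ∧ g x < min p.1 p.2}) :=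
            mul_le_mul_right h2 c
        _ = c ^ 2 * (ν.prod ν) {p : ℝ × ℝ | x < p.1 + p.2 ∧ g x < min p.1 p.2} := by
            rw [pow_two, mul_assoc]
    exact (ENNReal.div_le_iff_le_mul (Or.inr (ENNReal.pow_ne_top hctop))
      (Or.inl (measure_ne_top _ _))).mpr hN
  -- take c = L + 1/n and let n → ∞
  have htend : Tendsto (fun n : ℕ => (L + (n : ℝ≥0∞)⁻¹) ^ 2) atTop (𝓝 (L ^ 2)) := by
    have h0 : Tendsto (fun n : ℕ => (n : ℝ≥0∞)⁻¹) atTop (𝓝 0) :=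
      ENNReal.tendsto_inv_nat_nhds_zero
    have h1 : Tendsto (fun n : ℕ => L + (n : ℝ≥0∞)⁻¹) atTop (𝓝 L) := by
      simpa using tendsto_const_nhds.add h0
    exact ((ENNReal.continuous_pow 2).continuousAt.tendsto).comp h1
  refine ge_of_tendsto htend ?_
  filter_upwards [eventually_ge_atTop 1] with n hn
  refine hstep _ ?_ ?_
  · exact ENNReal.lt_add_right hLtop (ENNReal.inv_ne_zero.mpr (ENNReal.natCast_ne_top n))
  · exact ENNReal.add_ne_top.mpr ⟨hLtop,
      ENNReal.inv_ne_top.mpr (Nat.cast_ne_zero.mpr (by omega))⟩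
end
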